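/- arXiv:1509.01460 — 4 statements merged into one kernel-verified Lean document; each statement's English description precedes it below -/
import Mathlib

section
/- Let u be analytic on D and φ an analytic self-map of D with 1 ≤ p < ∞, α > -1. If sup_{z∈D} (1-|z|^2)|u'(z)|/(1-|φ(z)|^2)^{(2+α)/p} < ∞ and sup_{z∈D} (1-|z|^2)|u(z)φ'(z)|/(1-|φ(z)|^2)^{(2+α+p)/p} < ∞, then the weighted composition operator uC_φ: A^p_α → B is bounded. -/
open MeasureTheory Set Filter Topology Metric
open scoped Real

set_option maxHeartbeats 2000000

noncomputable section

/-- The open unit disk in ℂ. -/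
def UD : Set ℂ := Metric.ball 0 1

/-- Membership in the weighted Bergman space `A^p_α`. -/
def memAp (p α : ℝ) (f : ℂ → ℂ) : Prop :=
  DifferentiableOn ℂ f UD ∧
    IntegrableOn (fun z => ‖f z‖ ^ p * (1 - ‖z‖ ^ 2) ^ α) UD volume

/-- The norm of `A^p_α` (with normalized area measure `dA = volume/π`). -/
def bergNorm (p α : ℝ) (f : ℂ → ℂ) : ℝ :=
  ((α + 1) * ((∫ z in UD, ‖f z‖ ^ p * (1 - ‖z‖ ^ 2) ^ α) / Real.pi)) ^ (1 / p)

lemma UD_open : IsOpen UD := isOpen_ball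

lemma circleMap_eq_polar (w : ℂ) (s θ : ℝ) :
    circleMap w s θ = w + Complex.polarCoord.symm (s, θ) := by
  simp only [circleMap, Complex.polarCoord_symm_apply, Complex.exp_mul_I]
  rw [← Complex.ofReal_cos, ← Complex.ofReal_sin]

lemma circle_mean {g : ℂ → ℂ} (hg : DifferentiableOn ℂ g UD) {w : ℂ} {s : ℝ}
    (hs : 0 < s) (hsub : closedBall w s ⊆ UD) :
    2 * π * ‖g w‖ ≤ ∫ θ in Ioo (-π) π, ‖g (w + Complex.polarCoord.symm (s, θ))‖ := by
  have key : (∮ z in C(w, s), (z - w)⁻¹ • g z) = (2 * ↑π * Complex.I : ℂ) • g w :=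
    Complex.circleIntegral_sub_center_inv_smul_of_differentiable_on_off_countable hs
      Set.countable_empty (hg.continuousOn.mono hsub)
      (fun z hz => hg.differentiableAt
        (UD_open.mem_nhds (hsub (ball_subset_closedBall hz.1))))
  have key2 : (∫ θ in (0:ℝ)..(2*π), Complex.I • g (circleMap w s θ))
      = (2 * ↑π * Complex.I : ℂ) • g w := by
    rw [← key]
    simp only [circleIntegral, deriv_circleMap, circleMap_sub_center, smul_smul]
    congr 1; ext θ
    congr 1
    have h0 : circleMap 0 s θ ≠ 0 := circleMap_ne_center hs.ne'
    field_simp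
  have h1 : 2 * π * ‖g w‖ ≤ ∫ θ in (0:ℝ)..(2*π), ‖g (circleMap w s θ)‖ := by
    have := intervalIntegral.norm_integral_le_integral_norm (μ := volume)
      (f := fun θ => Complex.I • g (circleMap w s θ)) (a := 0) (b := 2*π)
      (by positivity)
    rw [key2] at this
    calc 2 * π * ‖g w‖ = ‖(2 * ↑π * Complex.I : ℂ) • g w‖ := by
          rw [norm_smul]
          norm_num [Complex.norm_of_nonneg Real.pi_pos.le, abs_of_nonneg Real.pi_pos.le]
      _ ≤ ∫ θ in (0:ℝ)..(2*π), ‖Complex.I • g (circleMap w s θ)‖ := this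
      _ = ∫ θ in (0:ℝ)..(2*π), ‖g (circleMap w s θ)‖ := by
          congr 1; ext θ; rw [norm_smul]; simp
  have hper : Function.Periodic (fun θ => ‖g (circleMap w s θ)‖) (2*π) :=
    fun θ => by simp [(periodic_circleMap w s) θ]
  have h2 : (∫ θ in (0:ℝ)..(2*π), ‖g (circleMap w s θ)‖)
      = ∫ θ in (-π)..π, ‖g (circleMap w s θ)‖ := by
    have := hper.intervalIntegral_add_eq 0 (-π)
    rw [zero_add] at this
    rw [this]
    congr 1
    ring
  rw [h2, intervalIntegral.integral_of_le (by linarith [Real.pi_pos]),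
    MeasureTheory.integral_Ioc_eq_integral_Ioo] at h1
  calc 2 * π * ‖g w‖ ≤ _ := h1
    _ = _ := by
      apply setIntegral_congr_fun measurableSet_Ioo
      intro θ _
      simp only
      rw [circleMap_eq_polar]

lemma area_submean {g : ℂ → ℂ} (hg : DifferentiableOn ℂ g UD) {w : ℂ} {r : ℝ}
    (hr : 0 < r) (hsub : closedBall w r ⊆ UD) :
    π * r ^ 2 * ‖g w‖ ≤ ∫ z in ball w r, ‖g z‖ := by
  set T : Set (ℝ × ℝ) := Ioo 0 r ×ˢ Ioo (-π) π with hT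
  set h : ℝ × ℝ → ℝ := fun p => p.1 * ‖g (w + Complex.polarCoord.symm p)‖ with hh
  -- continuity of h on a compact rectangle
  have hsymm : Continuous (fun p : ℝ × ℝ => Complex.polarCoord.symm p) := by
    have : (fun p : ℝ × ℝ => Complex.polarCoord.symm p)
        = fun p : ℝ × ℝ => (p.1 : ℂ) * (Real.cos p.2 + Real.sin p.2 * Complex.I) := by
      funext p; exact Complex.polarCoord_symm_apply p
    rw [this]; continuity
  have hmaps : MapsTo (fun p : ℝ × ℝ => w + Complex.polarCoord.symm p)
      (Icc 0 r ×ˢ Icc (-π) π) UD := by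
    intro p hp
    apply hsub
    simp only [Metric.mem_closedBall, dist_eq_norm, add_sub_cancel_left]
    rw [Complex.norm_polarCoord_symm, abs_of_nonneg hp.1.1]
    exact hp.1.2
  have hcont : ContinuousOn h (Icc 0 r ×ˢ Icc (-π) π) := by
    apply ContinuousOn.mul (continuous_fst.continuousOn)
    exact (hg.continuousOn.comp ((continuous_const.add hsymm).continuousOn) hmaps).norm
  have hTsub : T ⊆ Icc 0 r ×ˢ Icc (-π) π :=
    Set.prod_mono Ioo_subset_Icc_self Ioo_subset_Icc_self
  have hInt : IntegrableOn h T := by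
    exact (hcont.integrableOn_compact (isCompact_Icc.prod isCompact_Icc)).mono_set hTsub
  have hrestrict : (volume : Measure (ℝ × ℝ)).restrict T
      = (volume.restrict (Ioo (0:ℝ) r)).prod (volume.restrict (Ioo (-π) π)) := by
    rw [hT, MeasureTheory.Measure.volume_eq_prod, Measure.prod_restrict]
  have hInt' : Integrable h ((volume.restrict (Ioo (0:ℝ) r)).prod (volume.restrict (Ioo (-π) π))) := by
    rwa [← hrestrict]
  -- Fubini
  have hfub : ∫ p in T, h p = ∫ s in Ioo (0:ℝ) r, ∫ θ in Ioo (-π) π, h (s, θ) := by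
    rw [hrestrict, MeasureTheory.integral_prod _ hInt']
  -- lower bound for the iterated integral
  have hlow : π * r ^ 2 * ‖g w‖ ≤ ∫ s in Ioo (0:ℝ) r, ∫ θ in Ioo (-π) π, h (s, θ) := by
    have hid : (∫ s in Ioo (0:ℝ) r, s * (2 * π * ‖g w‖)) = π * r ^ 2 * ‖g w‖ := by
      rw [integral_mul_const, ← MeasureTheory.integral_Ioc_eq_integral_Ioo,
        ← intervalIntegral.integral_of_le hr.le, integral_id]
      ring
    rw [← hid]
    apply setIntegral_mono_on
    · exact ((intervalIntegral.intervalIntegrable_id (μ := volume) (a := 0)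
        (b := r)).1.mono_set Ioo_subset_Ioc_self).mul_const _
    · exact hInt'.integral_prod_left
    · exact measurableSet_Ioo
    · intro s hs
      have hcm : 2 * π * ‖g w‖ ≤ ∫ θ in Ioo (-π) π, ‖g (w + Complex.polarCoord.symm (s, θ))‖ :=
        circle_mean hg hs.1 ((closedBall_subset_closedBall hs.2.le).trans hsub)
      calc s * (2 * π * ‖g w‖) ≤ s * ∫ θ in Ioo (-π) π, ‖g (w + Complex.polarCoord.symm (s, θ))‖ :=
            mul_le_mul_of_nonneg_left hcm hs.1.le
        _ = ∫ θ in Ioo (-π) π, h (s, θ) := by rw [← integral_const_mul]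
  -- polar change of variables
  have hpolar : ∫ p in T, h p = ∫ z in ball w r, ‖g z‖ := by
    set F : ℂ → ℝ := (ball (0:ℂ) r).indicator (fun ζ => ‖g (w + ζ)‖) with hF
    have hA : (∫ p in polarCoord.target, p.1 • F (Complex.polarCoord.symm p)) = ∫ ζ, F ζ :=
      Complex.integral_comp_polarCoord_symm F
    have hB : (∫ p in polarCoord.target, p.1 • F (Complex.polarCoord.symm p)) = ∫ p in T, h p := by
      rw [show (∫ p in polarCoord.target, p.1 • F (Complex.polarCoord.symm p))
          = ∫ p in polarCoord.target, ((Iio r ×ˢ (univ : Set ℝ)).indicator h) p by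
        apply setIntegral_congr_fun polarCoord.open_target.measurableSet
        intro p hp
        rw [polarCoord_target] at hp
        have habs : ‖Complex.polarCoord.symm p‖ = p.1 := by
          rw [Complex.norm_polarCoord_symm, abs_of_pos hp.1]
        have habs' : |p.1| = p.1 := abs_of_pos hp.1
        by_cases hc : p.1 < r
        · have hmem : Complex.polarCoord.symm p ∈ ball (0:ℂ) r := by
            simp [Metric.mem_ball, dist_eq_norm, habs, habs', hc]
          have hmem' : p ∈ Iio r ×ˢ (univ : Set ℝ) := ⟨hc, mem_univ _⟩
          rw [hF]
          simp only [indicator_of_mem hmem, indicator_of_mem hmem', smul_eq_mul, hh]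
        · have hmem : Complex.polarCoord.symm p ∉ ball (0:ℂ) r := by
            simp [Metric.mem_ball, dist_eq_norm, habs, habs', hc]
          have hmem' : p ∉ Iio r ×ˢ (univ : Set ℝ) := by
            simp [hc]
          rw [hF]
          simp only [indicator_of_notMem hmem, indicator_of_notMem hmem', smul_zero]]
      rw [setIntegral_indicator (measurableSet_Iio.prod MeasurableSet.univ)]
      congr 1
      rw [polarCoord_target, Set.prod_inter_prod, Set.Ioi_inter_Iio, inter_univ]
    have e3 : ∀ ζ : ℂ, (ball w r).indicator (fun z => ‖g z‖) (w + ζ) = F ζ := by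
      intro ζ
      by_cases hm : ζ ∈ ball (0:ℂ) r
      · have hm' : w + ζ ∈ ball w r := by
          simpa [Metric.mem_ball, dist_eq_norm] using hm
        simp [hF, indicator_of_mem hm, indicator_of_mem hm']
      · have hm' : w + ζ ∉ ball w r := by
          intro hcon; apply hm
          simpa [Metric.mem_ball, dist_eq_norm] using hcon
        simp [hF, indicator_of_notMem hm, indicator_of_notMem hm']
    have hC : ∫ ζ, F ζ = ∫ z in ball w r, ‖g z‖ := by
      have e1 : ∫ z in ball w r, ‖g z‖ = ∫ z, (ball w r).indicator (fun z => ‖g z‖) z :=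
        (MeasureTheory.integral_indicator measurableSet_ball).symm
      have e2 := MeasureTheory.integral_add_left_eq_self (μ := volume)
        ((ball w r).indicator (fun z => ‖g z‖)) w
      rw [e1, ← e2]
      congr 1; funext ζ; rw [e3]
    rw [← hB, hA, hC]
  rw [← hpolar, hfub]
  exact hlow

lemma wint_nonneg (p α : ℝ) (f : ℂ → ℂ) :
    0 ≤ ∫ z in UD, ‖f z‖ ^ p * (1 - ‖z‖ ^ 2) ^ α := by
  apply setIntegral_nonneg (measurableSet_ball)
  intro z hz
  have h1 : (0:ℝ) < 1 - ‖z‖ ^ 2 := by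
    have := mem_ball_zero_iff.mp hz
    nlinarith [norm_nonneg z]
  positivity

lemma bergNorm_nonneg (p α : ℝ) (hα : -1 < α) (f : ℂ → ℂ) : 0 ≤ bergNorm p α f := by
  have h := wint_nonneg p α f
  have hπ := Real.pi_pos
  apply Real.rpow_nonneg
  apply mul_nonneg (by linarith) (div_nonneg h hπ.le)

lemma wint_rpow (p α : ℝ) (hp : 0 < p) (hα : -1 < α) (f : ℂ → ℂ) :
    (∫ z in UD, ‖f z‖ ^ p * (1 - ‖z‖ ^ 2) ^ α) ^ (1/p)
      = (π / (α+1)) ^ (1/p) * bergNorm p α f := by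
  have hπ := Real.pi_pos
  have h1 : (0:ℝ) < α + 1 := by linarith
  rw [bergNorm, ← Real.mul_rpow (by positivity)
    (by have := wint_nonneg p α f; positivity)]
  congr 1
  field_simp

lemma pt_bound (p α : ℝ) (hp : 1 ≤ p) (hα : -1 < α) :
    ∃ c₁ : ℝ, 0 ≤ c₁ ∧ ∀ f : ℂ → ℂ, memAp p α f → ∀ w ∈ UD,
      ‖f w‖ ≤ c₁ * bergNorm p α f * (1 - ‖w‖ ^ 2) ^ (-((2 + α) / p)) := by
  have hp0 : 0 < p := lt_of_lt_of_le one_pos hp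
  have hπ := Real.pi_pos
  have hα1 : (0:ℝ) < α + 1 := by linarith
  set cα : ℝ := min ((4:ℝ) ^ (-α)) ((3:ℝ) ^ α) with hcα
  clear_value cα
  have hcα0 : 0 < cα := by
    rw [hcα]
    exact lt_min (Real.rpow_pos_of_pos (by norm_num) _) (Real.rpow_pos_of_pos (by norm_num) _)
  refine ⟨(16/π) ^ (1/p) * (cα⁻¹) ^ (1/p) * (π/(α+1)) ^ (1/p),
    mul_nonneg (mul_nonneg (Real.rpow_nonneg (by positivity) _)
      (Real.rpow_nonneg (inv_nonneg.mpr hcα0.le) _))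
      (Real.rpow_nonneg (div_nonneg hπ.le hα1.le) _), ?_⟩
  intro f hf w hw
  have hw1 : ‖w‖ < 1 := mem_ball_zero_iff.mp hw
  have hw0 : (0:ℝ) ≤ ‖w‖ := norm_nonneg w
  set X : ℝ := 1 - ‖w‖ ^ 2 with hXdef
  clear_value X
  have hX0 : 0 < X := by nlinarith
  set r : ℝ := (1 - ‖w‖)/2 with hrdef
  clear_value r
  have hr0 : 0 < r := by rw [hrdef]; linarith
  have hXr : X / 4 ≤ r := by rw [hXdef, hrdef]; nlinarith
  have hsub : closedBall w r ⊆ UD := by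
    intro z hz
    rw [mem_closedBall, dist_eq_norm] at hz
    have : ‖z‖ ≤ ‖w‖ + r := by
      calc ‖z‖ = ‖w + (z - w)‖ := by ring_nf
        _ ≤ ‖w‖ + ‖z - w‖ := norm_add_le _ _
        _ ≤ ‖w‖ + r := by linarith
    rw [UD, mem_ball_zero_iff]
    have h2 : r = (1 - ‖w‖)/2 := hrdef
    linarith
  have hzf : ∀ z ∈ ball w r, X/4 ≤ 1 - ‖z‖^2 ∧ 1 - ‖z‖^2 ≤ 3*X := by
    intro z hz
    rw [mem_ball, dist_eq_norm] at hz
    obtain ⟨ha1, ha2⟩ := abs_le.mp (abs_norm_sub_norm_le z w)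
    have hz0 : (0:ℝ) ≤ ‖z‖ := norm_nonneg z
    have hr2 : r = (1 - ‖w‖)/2 := hrdef
    have hX2 : X = 1 - ‖w‖ ^ 2 := hXdef
    have hz1 : ‖z‖ < 1 := by linarith
    constructor
    · nlinarith [sq_nonneg (‖z‖ - ‖w‖), sq_nonneg (‖z‖ + ‖w‖), sq_nonneg (1 - ‖z‖)]
    · nlinarith [sq_nonneg (‖z‖ - ‖w‖), sq_nonneg (‖z‖ + ‖w‖), sq_nonneg (1 - ‖z‖)]
  have hwt : ∀ z ∈ ball w r, cα * X ^ α ≤ (1 - ‖z‖^2) ^ α := by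
    intro z hz
    obtain ⟨hlo, hhi⟩ := hzf z hz
    have hzpos : (0:ℝ) < 1 - ‖z‖^2 := lt_of_lt_of_le (by linarith) hlo
    rcases le_or_gt 0 α with hα0 | hα0
    · calc cα * X ^ α ≤ 4 ^ (-α) * X ^ α :=
            mul_le_mul_of_nonneg_right (by rw [hcα]; exact min_le_left _ _)
              (Real.rpow_nonneg hX0.le _)
        _ = (X/4) ^ α := by
            rw [Real.div_rpow hX0.le (by norm_num), Real.rpow_neg (by norm_num)]
            rw [div_eq_mul_inv, mul_comm]
        _ ≤ (1 - ‖z‖^2) ^ α := Real.rpow_le_rpow (by linarith) hlo hα0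
    · calc cα * X ^ α ≤ 3 ^ α * X ^ α :=
            mul_le_mul_of_nonneg_right (by rw [hcα]; exact min_le_right _ _)
              (Real.rpow_nonneg hX0.le _)
        _ = (3*X) ^ α := (Real.mul_rpow (by norm_num) hX0.le).symm
        _ ≤ (1 - ‖z‖^2) ^ α := Real.rpow_le_rpow_of_nonpos hzpos hhi hα0.le
  set I : ℝ := ∫ z in UD, ‖f z‖ ^ p * (1 - ‖z‖ ^ 2) ^ α with hIdef
  clear_value I
  have hI0 : 0 ≤ I := by rw [hIdef]; exact wint_nonneg p α f
  have hIball : IntegrableOn (fun z => ‖f z‖ ^ p * (1 - ‖z‖ ^ 2) ^ α) (ball w r) :=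
    hf.2.mono_set (ball_subset_closedBall.trans hsub)
  have hfc : ContinuousOn f (closedBall w r) := hf.1.continuousOn.mono hsub
  have hfpcont : ContinuousOn (fun z => ‖f z‖ ^ p) (closedBall w r) :=
    hfc.norm.rpow_const (fun z _ => Or.inr hp0.le)
  have hfpInt : IntegrableOn (fun z => ‖f z‖ ^ p) (ball w r) :=
    (hfpcont.integrableOn_compact (isCompact_closedBall _ _)).mono_set ball_subset_closedBall
  have hfpnn : 0 ≤ ∫ z in ball w r, ‖f z‖ ^ p :=
    setIntegral_nonneg measurableSet_ball (fun z _ => Real.rpow_nonneg (norm_nonneg _) _)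
  -- step (iii)
  have h3 : (∫ z in ball w r, ‖f z‖ ^ p) ≤ (cα * X ^ α)⁻¹ * I := by
    have hpos : (0:ℝ) < cα * X ^ α := mul_pos hcα0 (Real.rpow_pos_of_pos hX0 α)
    have hpt : ∀ z ∈ ball w r,
        ‖f z‖ ^ p ≤ (cα * X ^ α)⁻¹ * (‖f z‖ ^ p * (1 - ‖z‖^2) ^ α) := by
      intro z hz
      have h := mul_le_mul_of_nonneg_left (hwt z hz) (Real.rpow_nonneg (norm_nonneg (f z)) p)
      calc ‖f z‖ ^ p = (cα * X ^ α)⁻¹ * (‖f z‖ ^ p * (cα * X ^ α)) := by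
            field_simp [hpos.ne']
        _ ≤ (cα * X ^ α)⁻¹ * (‖f z‖ ^ p * (1 - ‖z‖^2) ^ α) :=
            mul_le_mul_of_nonneg_left h (inv_nonneg.mpr hpos.le)
    calc (∫ z in ball w r, ‖f z‖ ^ p)
        ≤ ∫ z in ball w r, (cα * X ^ α)⁻¹ * (‖f z‖ ^ p * (1 - ‖z‖^2) ^ α) :=
          setIntegral_mono_on hfpInt (hIball.const_mul _) measurableSet_ball hpt
      _ = (cα * X ^ α)⁻¹ * ∫ z in ball w r, ‖f z‖ ^ p * (1 - ‖z‖^2) ^ α := by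
          rw [← integral_const_mul]
      _ ≤ (cα * X ^ α)⁻¹ * I := by
          apply mul_le_mul_of_nonneg_left _ (inv_nonneg.mpr hpos.le)
          rw [hIdef]
          apply setIntegral_mono_set hf.2
          · refine (ae_restrict_iff' measurableSet_ball).mpr (ae_of_all _ fun z hz => ?_)
            have h1 : (0:ℝ) < 1 - ‖z‖ ^ 2 := by
              have := mem_ball_zero_iff.mp hz
              nlinarith [norm_nonneg z]
            positivity
          · exact HasSubset.Subset.eventuallyLE (ball_subset_closedBall.trans hsub)
  -- step (i)
  have harea := area_submean hf.1 hr0 hsub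
  set V : ℝ := π * r ^ 2 with hVdef
  clear_value V
  have hV0 : 0 < V := by rw [hVdef]; positivity
  have h1 : ‖f w‖ ≤ V⁻¹ * ∫ z in ball w r, ‖f z‖ := by
    calc ‖f w‖ = V⁻¹ * (V * ‖f w‖) := by field_simp
      _ ≤ V⁻¹ * ∫ z in ball w r, ‖f z‖ :=
          mul_le_mul_of_nonneg_left harea (inv_nonneg.mpr hV0.le)
  -- step (ii) Hölder
  have hVvol : (volume (ball w r)).toReal = V := by
    rw [Complex.volume_ball, ENNReal.toReal_mul, ENNReal.toReal_pow,
      ENNReal.toReal_ofReal hr0.le, hVdef]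
    simp [mul_comm]
  have h2 : (∫ z in ball w r, ‖f z‖) ≤ (∫ z in ball w r, ‖f z‖ ^ p) ^ (1/p) * V ^ (1 - 1/p) := by
    rcases eq_or_lt_of_le hp with hp1 | hp1
    · rw [← hp1]
      norm_num
    · haveI : IsFiniteMeasure (volume.restrict (ball w r)) :=
        ⟨by rw [Measure.restrict_apply_univ]; exact measure_ball_lt_top⟩
      have hq : p.HolderConjugate (p/(p-1)) := Real.HolderConjugate.conjExponent hp1
      obtain ⟨Cb, hCb⟩ := (isCompact_closedBall w r).exists_bound_of_continuousOn hfc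
      have hmeas : AEStronglyMeasurable (fun z => ‖f z‖) (volume.restrict (ball w r)) :=
        (hfc.mono ball_subset_closedBall).norm.aestronglyMeasurable measurableSet_ball
      have hmem : MemLp (fun z => ‖f z‖) (ENNReal.ofReal p) (volume.restrict (ball w r)) := by
        apply MemLp.of_bound hmeas Cb
        refine (ae_restrict_iff' measurableSet_ball).mpr (ae_of_all _ fun z hz => ?_)
        rw [Real.norm_eq_abs, abs_of_nonneg (norm_nonneg _)]
        exact hCb z (ball_subset_closedBall hz)
      have hmem1 : MemLp (fun _ : ℂ => (1:ℝ)) (ENNReal.ofReal (p/(p-1)))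
          (volume.restrict (ball w r)) := memLp_const 1
      have hH := MeasureTheory.integral_mul_le_Lp_mul_Lq_of_nonneg hq
        (ae_of_all _ fun z => norm_nonneg (f z)) (ae_of_all _ fun _ => zero_le_one)
        hmem hmem1
      simp only [mul_one, Real.one_rpow] at hH
      rw [integral_const, smul_eq_mul, mul_one, measureReal_restrict_apply_univ, measureReal_def, hVvol] at hH
      have hq1 : 1/(p/(p-1)) = 1 - 1/p := by
        field_simp
      rwa [hq1] at hH
  -- combine
  have hmono3 : (∫ z in ball w r, ‖f z‖ ^ p) ^ (1/p) ≤ ((cα * X ^ α)⁻¹ * I) ^ (1/p) :=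
    Real.rpow_le_rpow hfpnn h3 (one_div_nonneg.mpr hp0.le)
  have hVX : (π/16) * X^2 ≤ V := by
    have h4 : (X/4)^2 ≤ r^2 := by nlinarith [hXr, hX0]
    calc (π/16) * X^2 = π * (X/4)^2 := by ring
      _ ≤ π * r^2 := mul_le_mul_of_nonneg_left h4 hπ.le
      _ = V := hVdef.symm
  calc ‖f w‖ ≤ V⁻¹ * ∫ z in ball w r, ‖f z‖ := h1
    _ ≤ V⁻¹ * ((∫ z in ball w r, ‖f z‖ ^ p) ^ (1/p) * V ^ (1 - 1/p)) :=
        mul_le_mul_of_nonneg_left h2 (inv_nonneg.mpr hV0.le)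
    _ = V ^ (-(1/p)) * (∫ z in ball w r, ‖f z‖ ^ p) ^ (1/p) := by
        rw [show V⁻¹ = V ^ (-1 : ℝ) by rw [Real.rpow_neg_one]]
        rw [← mul_assoc, mul_comm (V ^ (-1:ℝ)) _, mul_assoc, ← Real.rpow_add hV0]
        ring_nf
    _ ≤ V ^ (-(1/p)) * ((cα * X ^ α)⁻¹ * I) ^ (1/p) :=
        mul_le_mul_of_nonneg_left hmono3 (Real.rpow_nonneg hV0.le _)
    _ ≤ ((π/16) * X^2) ^ (-(1/p)) * ((cα * X ^ α)⁻¹ * I) ^ (1/p) := by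
        apply mul_le_mul_of_nonneg_right _ (Real.rpow_nonneg
          (mul_nonneg (inv_nonneg.mpr (mul_pos hcα0 (Real.rpow_pos_of_pos hX0 α)).le) hI0) _)
        exact Real.rpow_le_rpow_of_nonpos
          (mul_pos (by positivity) (pow_pos hX0 2)) hVX
          (neg_nonpos.mpr (one_div_nonneg.mpr hp0.le))
    _ = (16/π) ^ (1/p) * (cα⁻¹) ^ (1/p) * (π/(α+1)) ^ (1/p) * bergNorm p α f
        * X ^ (-((2 + α) / p)) := by
        have hXα : (0:ℝ) ≤ X ^ α := Real.rpow_nonneg hX0.le _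
        have e1a : ((π/16 : ℝ)) ^ (-(1/p)) = (16/π) ^ (1/p) := by
          rw [Real.rpow_neg (by positivity), ← Real.inv_rpow (by positivity), inv_div]
        have e1b : ((X^2 : ℝ)) ^ (-(1/p)) = X ^ (-(2/p)) := by
          rw [← Real.rpow_natCast X 2, ← Real.rpow_mul hX0.le]
          congr 1
          push_cast
          ring
        have e2a : ((X ^ α)⁻¹ : ℝ) ^ (1/p) = X ^ (-(α/p)) := by
          rw [← Real.rpow_neg hX0.le, ← Real.rpow_mul hX0.le]
          congr 1
          ring
        have e2b : I ^ (1/p) = (π/(α+1)) ^ (1/p) * bergNorm p α f := by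
          rw [hIdef]
          exact wint_rpow p α hp0 hα f
        rw [Real.mul_rpow (by positivity : (0:ℝ) ≤ π/16) (sq_nonneg X),
          e1a, e1b, mul_inv,
          Real.mul_rpow (mul_nonneg (inv_nonneg.mpr hcα0.le) (inv_nonneg.mpr hXα)) hI0,
          Real.mul_rpow (inv_nonneg.mpr hcα0.le) (inv_nonneg.mpr hXα),
          e2a, e2b,
          show X ^ (-((2 + α) / p)) = X ^ (-(2/p)) * X ^ (-(α/p)) by
            rw [← Real.rpow_add hX0]; congr 1; ring]
        ring

lemma deriv_bound (p α : ℝ) (hp : 1 ≤ p) (hα : -1 < α) :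
    ∃ c₂ : ℝ, 0 ≤ c₂ ∧ ∀ f : ℂ → ℂ, memAp p α f → ∀ w ∈ UD,
      ‖deriv f w‖ ≤ c₂ * bergNorm p α f * (1 - ‖w‖ ^ 2) ^ (-((2 + α + p) / p)) := by
  have hp0 : 0 < p := lt_of_lt_of_le one_pos hp
  obtain ⟨c₁, hc₁0, hc₁⟩ := pt_bound p α hp hα
  refine ⟨8 * ((3/8 : ℝ) ^ (-((2+α)/p))) * c₁, by positivity, ?_⟩
  intro f hf w hw
  have hw1 : ‖w‖ < 1 := mem_ball_zero_iff.mp hw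
  have hw0 : (0:ℝ) ≤ ‖w‖ := norm_nonneg w
  have hB0 : 0 ≤ bergNorm p α f := bergNorm_nonneg p α hα f
  set X : ℝ := 1 - ‖w‖ ^ 2 with hXdef
  clear_value X
  have hX0 : 0 < X := by nlinarith
  have hXle : X ≤ 2 * (1 - ‖w‖) := by nlinarith
  set ρ : ℝ := (1 - ‖w‖)/4 with hρdef
  clear_value ρ
  have hρ0 : 0 < ρ := by rw [hρdef]; linarith
  have hXρ : X/8 ≤ ρ := by rw [hρdef]; linarith
  have hsub : closedBall w ρ ⊆ UD := by
    intro z hz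
    rw [mem_closedBall, dist_eq_norm] at hz
    have : ‖z‖ ≤ ‖w‖ + ρ := by
      calc ‖z‖ = ‖w + (z - w)‖ := by ring_nf
        _ ≤ ‖w‖ + ‖z - w‖ := norm_add_le _ _
        _ ≤ ‖w‖ + ρ := by linarith
    rw [UD, mem_ball_zero_iff]
    have h2 : ρ = (1 - ‖w‖)/4 := hρdef
    linarith
  have hd : DiffContOnCl ℂ f (ball w ρ) := by
    constructor
    · exact hf.1.mono (ball_subset_closedBall.trans hsub)
    · rw [closure_ball w hρ0.ne']
      exact hf.1.continuousOn.mono hsub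
  have he0 : 0 ≤ (2 + α)/p := div_nonneg (by linarith) hp0.le
  set C : ℝ := c₁ * bergNorm p α f * ((3/8) * X) ^ (-((2+α)/p)) with hCdef
  have hC0 : 0 ≤ C := by
    rw [hCdef]
    exact mul_nonneg (mul_nonneg hc₁0 hB0) (Real.rpow_nonneg (by positivity) _)
  have hC : ∀ z ∈ sphere w ρ, ‖f z‖ ≤ C := by
    intro z hz
    rw [mem_sphere, dist_eq_norm] at hz
    have hzcb : z ∈ closedBall w ρ := by
      rw [mem_closedBall, dist_eq_norm, hz]
    have hzUD : z ∈ UD := hsub hzcb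
    have hz1 : ‖z‖ < 1 := mem_ball_zero_iff.mp hzUD
    have hzn : ‖z‖ ≤ ‖w‖ + ρ := by
      calc ‖z‖ = ‖w + (z - w)‖ := by ring_nf
        _ ≤ ‖w‖ + ‖z - w‖ := norm_add_le _ _
        _ = ‖w‖ + ρ := by rw [hz]
    have hlow : (3/8) * X ≤ 1 - ‖z‖ ^ 2 := by
      have h2 : ρ = (1 - ‖w‖)/4 := hρdef
      nlinarith [norm_nonneg z]
    have hrw : (1 - ‖z‖ ^ 2) ^ (-((2+α)/p)) ≤ ((3/8) * X) ^ (-((2+α)/p)) :=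
      Real.rpow_le_rpow_of_nonpos (by positivity) hlow (neg_nonpos.mpr he0)
    calc ‖f z‖ ≤ c₁ * bergNorm p α f * (1 - ‖z‖ ^ 2) ^ (-((2 + α)/p)) := hc₁ f hf z hzUD
      _ ≤ C := by
          rw [hCdef]
          exact mul_le_mul_of_nonneg_left hrw (mul_nonneg hc₁0 hB0)
  have htri : ‖deriv f w‖ ≤ C / ρ :=
    Complex.norm_deriv_le_of_forall_mem_sphere_norm_le hρ0 hd hC
  have hXmerge : X ^ (-((2+α+p)/p)) = X ^ (-((2+α)/p)) * X⁻¹ := by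
    rw [← Real.rpow_neg_one X, ← Real.rpow_add hX0]
    congr 1
    field_simp
    ring
  calc ‖deriv f w‖ ≤ C / ρ := htri
    _ ≤ C / (X/8) := div_le_div_of_nonneg_left hC0 (by linarith) hXρ
    _ = 8 * ((3/8 : ℝ) ^ (-((2+α)/p))) * c₁ * bergNorm p α f * X ^ (-((2+α+p)/p)) := by
        rw [hXmerge, hCdef, Real.mul_rpow (by norm_num) hX0.le]
        field_simp

/-- the two sup-conditions imply boundedness of `uC_φ : A^p_α → B`. -/
theorem stmt9 (p α : ℝ) (hp : 1 ≤ p) (hα : -1 < α) (u φ : ℂ → ℂ)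
    (hu : DifferentiableOn ℂ u UD) (hφ : DifferentiableOn ℂ φ UD) (hφm : MapsTo φ UD UD)
    (h1 : ∃ M : ℝ, ∀ z ∈ UD,
      (1 - ‖z‖ ^ 2) * ‖deriv u z‖ ≤ M * (1 - ‖φ z‖ ^ 2) ^ ((2 + α) / p))
    (h2 : ∃ M : ℝ, ∀ z ∈ UD,
      (1 - ‖z‖ ^ 2) * ‖u z * deriv φ z‖ ≤ M * (1 - ‖φ z‖ ^ 2) ^ ((2 + α + p) / p)) :
    ∃ C : ℝ, ∀ f : ℂ → ℂ, memAp p α f →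
      ∀ z ∈ UD, ‖u 0 * f (φ 0)‖ +
        (1 - ‖z‖ ^ 2) * ‖deriv (fun w => u w * f (φ w)) z‖ ≤ C * bergNorm p α f := by
  have hp0 : 0 < p := lt_of_lt_of_le one_pos hp
  obtain ⟨M₁, hM₁⟩ := h1
  obtain ⟨M₂, hM₂⟩ := h2
  obtain ⟨c₁, hc₁0, hc₁⟩ := pt_bound p α hp hα
  obtain ⟨c₂, hc₂0, hc₂⟩ := deriv_bound p α hp hα
  have h0UD : (0:ℂ) ∈ UD := mem_ball_self one_pos
  have hφ0 : φ 0 ∈ UD := hφm h0UD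
  have hYpos : ∀ z ∈ UD, (0:ℝ) < 1 - ‖φ z‖ ^ 2 := by
    intro z hz
    have := mem_ball_zero_iff.mp (hφm hz)
    nlinarith [norm_nonneg (φ z)]
  have hM₁0 : 0 ≤ M₁ := by
    have hpos : 0 < (1 - ‖φ 0‖ ^ 2) ^ ((2 + α) / p) :=
      Real.rpow_pos_of_pos (hYpos 0 h0UD) _
    have h00 : (0:ℝ) ≤ M₁ * (1 - ‖φ 0‖ ^ 2) ^ ((2 + α) / p) := by
      refine le_trans ?_ (hM₁ 0 h0UD)
      have : ‖(0:ℂ)‖ = 0 := norm_zero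
      rw [this]
      positivity
    nlinarith
  have hM₂0 : 0 ≤ M₂ := by
    have hpos : 0 < (1 - ‖φ 0‖ ^ 2) ^ ((2 + α + p) / p) :=
      Real.rpow_pos_of_pos (hYpos 0 h0UD) _
    have h00 : (0:ℝ) ≤ M₂ * (1 - ‖φ 0‖ ^ 2) ^ ((2 + α + p) / p) := by
      refine le_trans ?_ (hM₂ 0 h0UD)
      have : ‖(0:ℂ)‖ = 0 := norm_zero
      rw [this]
      positivity
    nlinarith
  refine ⟨‖u 0‖ * c₁ * (1 - ‖φ 0‖ ^ 2) ^ (-((2 + α) / p)) + M₁ * c₁ + M₂ * c₂, ?_⟩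
  intro f hf z hz
  have hB0 : 0 ≤ bergNorm p α f := bergNorm_nonneg p α hα f
  have hφz : φ z ∈ UD := hφm hz
  have hz1 : ‖z‖ < 1 := mem_ball_zero_iff.mp hz
  have hz2 : (0:ℝ) ≤ 1 - ‖z‖ ^ 2 := by nlinarith [norm_nonneg z]
  -- derivative formula
  have hud : HasDerivAt u (deriv u z) z := (hu.differentiableAt (UD_open.mem_nhds hz)).hasDerivAt
  have hφd : HasDerivAt φ (deriv φ z) z := (hφ.differentiableAt (UD_open.mem_nhds hz)).hasDerivAt
  have hfd : HasDerivAt f (deriv f (φ z)) (φ z) :=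
    (hf.1.differentiableAt (UD_open.mem_nhds hφz)).hasDerivAt
  have hcomp : HasDerivAt (fun w => f (φ w)) (deriv f (φ z) * deriv φ z) z :=
    hfd.comp z hφd
  have hderiv : deriv (fun w => u w * f (φ w)) z
      = deriv u z * f (φ z) + u z * (deriv f (φ z) * deriv φ z) :=
    (hud.mul hcomp).deriv
  -- cancellation facts
  have hcancel1 : (1 - ‖φ z‖ ^ 2) ^ ((2 + α) / p) * (1 - ‖φ z‖ ^ 2) ^ (-((2 + α) / p)) = 1 := by
    rw [← Real.rpow_add (hYpos z hz)]
    simp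
  have hcancel2 : (1 - ‖φ z‖ ^ 2) ^ ((2 + α + p) / p)
      * (1 - ‖φ z‖ ^ 2) ^ (-((2 + α + p) / p)) = 1 := by
    rw [← Real.rpow_add (hYpos z hz)]
    simp
  -- term bounds
  have hA : (1 - ‖z‖ ^ 2) * ‖deriv u z * f (φ z)‖ ≤ M₁ * c₁ * bergNorm p α f := by
    rw [norm_mul, ← mul_assoc]
    calc (1 - ‖z‖ ^ 2) * ‖deriv u z‖ * ‖f (φ z)‖
        ≤ (M₁ * (1 - ‖φ z‖ ^ 2) ^ ((2 + α) / p))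
          * (c₁ * bergNorm p α f * (1 - ‖φ z‖ ^ 2) ^ (-((2 + α) / p))) :=
          mul_le_mul (hM₁ z hz) (hc₁ f hf (φ z) hφz) (norm_nonneg _)
            (mul_nonneg hM₁0 (Real.rpow_nonneg (hYpos z hz).le _))
      _ = M₁ * c₁ * bergNorm p α f
          * ((1 - ‖φ z‖ ^ 2) ^ ((2 + α) / p) * (1 - ‖φ z‖ ^ 2) ^ (-((2 + α) / p))) := by
          ring
      _ = M₁ * c₁ * bergNorm p α f := by rw [hcancel1, mul_one]
  have hB : (1 - ‖z‖ ^ 2) * ‖u z * (deriv f (φ z) * deriv φ z)‖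
      ≤ M₂ * c₂ * bergNorm p α f := by
    have hnorm : ‖u z * (deriv f (φ z) * deriv φ z)‖
        = ‖u z * deriv φ z‖ * ‖deriv f (φ z)‖ := by
      rw [norm_mul, norm_mul, norm_mul]
      ring
    rw [hnorm, ← mul_assoc]
    calc (1 - ‖z‖ ^ 2) * ‖u z * deriv φ z‖ * ‖deriv f (φ z)‖
        ≤ (M₂ * (1 - ‖φ z‖ ^ 2) ^ ((2 + α + p) / p))
          * (c₂ * bergNorm p α f * (1 - ‖φ z‖ ^ 2) ^ (-((2 + α + p) / p))) :=
          mul_le_mul (hM₂ z hz) (hc₂ f hf (φ z) hφz) (norm_nonneg _)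
            (mul_nonneg hM₂0 (Real.rpow_nonneg (hYpos z hz).le _))
      _ = M₂ * c₂ * bergNorm p α f
          * ((1 - ‖φ z‖ ^ 2) ^ ((2 + α + p) / p) * (1 - ‖φ z‖ ^ 2) ^ (-((2 + α + p) / p))) := by
          ring
      _ = M₂ * c₂ * bergNorm p α f := by rw [hcancel2, mul_one]
  have hK : ‖u 0 * f (φ 0)‖
      ≤ ‖u 0‖ * c₁ * (1 - ‖φ 0‖ ^ 2) ^ (-((2 + α) / p)) * bergNorm p α f := by
    rw [norm_mul]
    calc ‖u 0‖ * ‖f (φ 0)‖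
        ≤ ‖u 0‖ * (c₁ * bergNorm p α f * (1 - ‖φ 0‖ ^ 2) ^ (-((2 + α) / p))) :=
          mul_le_mul_of_nonneg_left (hc₁ f hf (φ 0) hφ0) (norm_nonneg _)
      _ = ‖u 0‖ * c₁ * (1 - ‖φ 0‖ ^ 2) ^ (-((2 + α) / p)) * bergNorm p α f := by ring
  have hsplit : (1 - ‖z‖ ^ 2) * ‖deriv (fun w => u w * f (φ w)) z‖
      ≤ M₁ * c₁ * bergNorm p α f + M₂ * c₂ * bergNorm p α f := by
    rw [hderiv]
    calc (1 - ‖z‖ ^ 2) * ‖deriv u z * f (φ z) + u z * (deriv f (φ z) * deriv φ z)‖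
        ≤ (1 - ‖z‖ ^ 2) * (‖deriv u z * f (φ z)‖ + ‖u z * (deriv f (φ z) * deriv φ z)‖) :=
          mul_le_mul_of_nonneg_left (norm_add_le _ _) hz2
      _ = (1 - ‖z‖ ^ 2) * ‖deriv u z * f (φ z)‖
          + (1 - ‖z‖ ^ 2) * ‖u z * (deriv f (φ z) * deriv φ z)‖ := by ring
      _ ≤ M₁ * c₁ * bergNorm p α f + M₂ * c₂ * bergNorm p α f := add_le_add hA hB
  calc ‖u 0 * f (φ 0)‖ + (1 - ‖z‖ ^ 2) * ‖deriv (fun w => u w * f (φ w)) z‖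
      ≤ ‖u 0‖ * c₁ * (1 - ‖φ 0‖ ^ 2) ^ (-((2 + α) / p)) * bergNorm p α f
        + (M₁ * c₁ * bergNorm p α f + M₂ * c₂ * bergNorm p α f) := add_le_add hK hsplit
    _ = (‖u 0‖ * c₁ * (1 - ‖φ 0‖ ^ 2) ^ (-((2 + α) / p)) + M₁ * c₁ + M₂ * c₂)
        * bergNorm p α f := by ring
end
end

section
/- Let v(z) = (1-|z|^2)^β with β > 0. The weighted composition operator uC_φ: H^∞_v → H^∞_{v₁} (where v₁(z) = 1-|z|^2) is bounded if and only if sup_{z∈D} (1-|z|^2)|u(z)|/(1-|φ(z)|^2)^β < ∞, and in that case the operator norm equals this supremum (for u not identically zero). -/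
open MeasureTheory Set Filter Topology Metric

noncomputable section

namespace Stmt10Aux

lemma mem_UD_iff {z : ℂ} : z ∈ UD ↔ ‖z‖ < 1 := by
  simp [UD, mem_ball_zero_iff]

lemma one_sub_sq_pos {z : ℂ} (hz : z ∈ UD) : 0 < 1 - ‖z‖ ^ 2 := by
  rw [mem_UD_iff] at hz
  nlinarith [norm_nonneg z]

lemma base_re_pos {w z : ℂ} (hw : w ∈ UD) (hz : z ∈ UD) :
    0 < (1 - (starRingEnd ℂ) w * z).re := by
  rw [mem_UD_iff] at hw hz
  have h1 : ((starRingEnd ℂ) w * z).re ≤ ‖(starRingEnd ℂ) w * z‖ := by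
    exact Complex.re_le_norm _
  have h2 : ‖(starRingEnd ℂ) w * z‖ = ‖w‖ * ‖z‖ := by
    rw [norm_mul, RCLike.norm_conj]
  have h3 : ‖w‖ * ‖z‖ < 1 := by nlinarith [norm_nonneg w, norm_nonneg z]
  simp only [Complex.sub_re, Complex.one_re]
  rw [h2] at h1
  linarith

lemma key_ineq (w z : ℂ) :
    (1 - ‖z‖ ^ 2) * (1 - ‖w‖ ^ 2) ≤ ‖1 - (starRingEnd ℂ) w * z‖ ^ 2 := by
  have hw : ‖w‖ ^ 2 = w.re ^ 2 + w.im ^ 2 := by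
    rw [Complex.sq_norm, Complex.normSq_apply]; ring
  have hz : ‖z‖ ^ 2 = z.re ^ 2 + z.im ^ 2 := by
    rw [Complex.sq_norm, Complex.normSq_apply]; ring
  have hb : ‖1 - (starRingEnd ℂ) w * z‖ ^ 2 =
      (1 - (w.re * z.re + w.im * z.im)) ^ 2 + (w.re * z.im - w.im * z.re) ^ 2 := by
    rw [Complex.sq_norm, Complex.normSq_apply]
    simp [Complex.sub_re, Complex.sub_im, Complex.mul_re, Complex.mul_im]
    ring
  rw [hw, hz, hb]
  nlinarith [sq_nonneg (w.re - z.re), sq_nonneg (w.im - z.im)]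

/-- The test function `f_w(z) = (1-|w|²)^β (1 - w̄ z)^{-2β}`. -/
def testF (β : ℝ) (w : ℂ) (z : ℂ) : ℂ :=
  (((1 - ‖w‖ ^ 2) ^ β : ℝ) : ℂ) * (1 - (starRingEnd ℂ) w * z) ^ ((-(2 * β) : ℝ) : ℂ)

lemma testF_diff (β : ℝ) {w : ℂ} (hw : w ∈ UD) :
    DifferentiableOn ℂ (testF β w) UD := by
  intro z hz
  apply DifferentiableAt.differentiableWithinAt
  apply DifferentiableAt.const_mul
  exact DifferentiableAt.cpow
    ((differentiableAt_const _).sub ((differentiableAt_const _).mul differentiableAt_id))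
    (differentiableAt_const _)
    (Complex.mem_slitPlane_iff.mpr (Or.inl (base_re_pos hw hz)))

lemma testF_norm (β : ℝ) {w : ℂ} (hw : w ∈ UD) (z : ℂ) :
    ‖testF β w z‖ = (1 - ‖w‖ ^ 2) ^ β * ‖1 - (starRingEnd ℂ) w * z‖ ^ (-(2 * β)) := by
  have hB : (0:ℝ) ≤ (1 - ‖w‖ ^ 2) ^ β := Real.rpow_nonneg (one_sub_sq_pos hw).le β
  have h1 : ‖((((1 - ‖w‖ ^ 2) ^ β : ℝ)) : ℂ)‖ = (1 - ‖w‖ ^ 2) ^ β := by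
    rw [Complex.norm_real, Real.norm_eq_abs, abs_of_nonneg hB]
  have h2 : ‖(1 - (starRingEnd ℂ) w * z) ^ ((-(2 * β) : ℝ) : ℂ)‖ =
      ‖1 - (starRingEnd ℂ) w * z‖ ^ (-(2 * β)) := by
    rw [Complex.norm_cpow_real]
  rw [testF, norm_mul, h1, h2]

lemma testF_bound {β : ℝ} (hβ : 0 < β) {w : ℂ} (hw : w ∈ UD) {z : ℂ} (hz : z ∈ UD) :
    (1 - ‖z‖ ^ 2) ^ β * ‖testF β w z‖ ≤ 1 := by
  set A := 1 - ‖z‖ ^ 2 with hAdef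
  set B := 1 - ‖w‖ ^ 2 with hBdef
  set N := ‖1 - (starRingEnd ℂ) w * z‖ with hNdef
  have hA : 0 < A := one_sub_sq_pos hz
  have hB : 0 < B := one_sub_sq_pos hw
  have hN2 : A * B ≤ N ^ 2 := key_ineq w z
  have hAB : 0 < A * B := mul_pos hA hB
  have hrw : N ^ (-(2 * β)) = (N ^ 2) ^ (-β) := by
    rw [← Real.rpow_natCast N 2, ← Real.rpow_mul (norm_nonneg _)]
    congr 1
    push_cast
    ring
  have h1 : (N ^ 2) ^ (-β) ≤ (A * B) ^ (-β) :=
    Real.rpow_le_rpow_of_nonpos hAB hN2 (neg_nonpos.mpr hβ.le)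
  rw [testF_norm β hw, hrw]
  calc A ^ β * (B ^ β * (N ^ 2) ^ (-β))
      ≤ A ^ β * (B ^ β * (A * B) ^ (-β)) := by
        apply mul_le_mul_of_nonneg_left _ (Real.rpow_nonneg hA.le β)
        exact mul_le_mul_of_nonneg_left h1 (Real.rpow_nonneg hB.le β)
    _ = 1 := by
        rw [Real.rpow_neg hAB.le, Real.mul_rpow hA.le hB.le, ← mul_assoc,
          mul_inv_cancel₀ (ne_of_gt (mul_pos (Real.rpow_pos_of_pos hA β)
            (Real.rpow_pos_of_pos hB β)))]

lemma testF_at (β : ℝ) {w : ℂ} (hw : w ∈ UD) :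
    ‖testF β w w‖ = ((1 - ‖w‖ ^ 2) ^ β)⁻¹ := by
  have hB : (0:ℝ) < 1 - ‖w‖ ^ 2 := one_sub_sq_pos hw
  have hb : ‖(1 : ℂ) - (starRingEnd ℂ) w * w‖ = 1 - ‖w‖ ^ 2 := by
    rw [mul_comm, Complex.mul_conj]
    have : (Complex.normSq w : ℝ) = ‖w‖ ^ 2 := by
      rw [Complex.normSq_eq_norm_sq]
    rw [show (1 : ℂ) - (Complex.normSq w : ℂ) = ((1 - ‖w‖ ^ 2 : ℝ) : ℂ) by
      push_cast [this]; ring]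
    rw [Complex.norm_real, Real.norm_eq_abs, abs_of_pos hB]
  rw [testF_norm β hw, hb, ← Real.rpow_add hB]
  rw [show β + -(2 * β) = -β by ring, Real.rpow_neg hB.le]

end Stmt10Aux

/-- `uC_φ : H^∞_{v_β} → H^∞_{v₁}` is bounded iff
`sup_{z∈D} (1-|z|^2)|u(z)|/(1-|φ(z)|^2)^β < ∞`, and (for `u` not identically zero)
the operator norm equals this supremum. -/
theorem stmt10 (β : ℝ) (hβ : 0 < β) (u φ : ℂ → ℂ)
    (hu : DifferentiableOn ℂ u UD) (hφ : DifferentiableOn ℂ φ UD) (hφm : MapsTo φ UD UD) :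
    ((∃ C : ℝ, ∀ f : ℂ → ℂ, DifferentiableOn ℂ f UD →
        (∀ z ∈ UD, (1 - ‖z‖ ^ 2) ^ β * ‖f z‖ ≤ 1) →
        ∀ z ∈ UD, (1 - ‖z‖ ^ 2) * ‖u z * f (φ z)‖ ≤ C) ↔
      (∃ M : ℝ, ∀ z ∈ UD, (1 - ‖z‖ ^ 2) * ‖u z‖ ≤ M * (1 - ‖φ z‖ ^ 2) ^ β)) ∧
    ((∃ C : ℝ, ∀ f : ℂ → ℂ, DifferentiableOn ℂ f UD →
        (∀ z ∈ UD, (1 - ‖z‖ ^ 2) ^ β * ‖f z‖ ≤ 1) →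
        ∀ z ∈ UD, (1 - ‖z‖ ^ 2) * ‖u z * f (φ z)‖ ≤ C) →
      (∃ z ∈ UD, u z ≠ 0) →
      sSup {y : ℝ | ∃ f : ℂ → ℂ, DifferentiableOn ℂ f UD ∧
          (∀ z ∈ UD, (1 - ‖z‖ ^ 2) ^ β * ‖f z‖ ≤ 1) ∧
          y = ⨆ z ∈ UD, (1 - ‖z‖ ^ 2) * ‖u z * f (φ z)‖} =
        ⨆ z ∈ UD, (1 - ‖z‖ ^ 2) * ‖u z‖ / (1 - ‖φ z‖ ^ 2) ^ β) := by
  have hUD0 : (0:ℂ) ∈ UD := by simp [UD]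
  have key : ∀ C : ℝ, (∀ f : ℂ → ℂ, DifferentiableOn ℂ f UD →
      (∀ z ∈ UD, (1 - ‖z‖ ^ 2) ^ β * ‖f z‖ ≤ 1) →
      ∀ z ∈ UD, (1 - ‖z‖ ^ 2) * ‖u z * f (φ z)‖ ≤ C) →
      ∀ z ∈ UD, (1 - ‖z‖ ^ 2) * ‖u z‖ ≤ C * (1 - ‖φ z‖ ^ 2) ^ β := by
    intro C hC z hz
    have hφz : φ z ∈ UD := hφm hz
    have h := hC (Stmt10Aux.testF β (φ z)) (Stmt10Aux.testF_diff β hφz)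
      (fun y hy => Stmt10Aux.testF_bound hβ hφz hy) z hz
    rw [norm_mul, Stmt10Aux.testF_at β hφz] at h
    have hBp : 0 < (1 - ‖φ z‖ ^ 2) ^ β :=
      Real.rpow_pos_of_pos (Stmt10Aux.one_sub_sq_pos hφz) β
    calc (1 - ‖z‖ ^ 2) * ‖u z‖
        = (1 - ‖z‖ ^ 2) * (‖u z‖ * ((1 - ‖φ z‖ ^ 2) ^ β)⁻¹) * (1 - ‖φ z‖ ^ 2) ^ β := by
          have h3 : ‖u z‖ * ((1 - ‖φ z‖ ^ 2) ^ β)⁻¹ * (1 - ‖φ z‖ ^ 2) ^ β = ‖u z‖ := by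
            rw [mul_assoc, inv_mul_cancel₀ hBp.ne', mul_one]
          rw [mul_assoc, h3]
      _ ≤ C * (1 - ‖φ z‖ ^ 2) ^ β := mul_le_mul_of_nonneg_right h hBp.le
  have hfinv : ∀ f : ℂ → ℂ, (∀ z ∈ UD, (1 - ‖z‖ ^ 2) ^ β * ‖f z‖ ≤ 1) →
      ∀ z ∈ UD, ‖f z‖ ≤ ((1 - ‖z‖ ^ 2) ^ β)⁻¹ := by
    intro f hfb z hz
    have hBp : 0 < (1 - ‖z‖ ^ 2) ^ β :=
      Real.rpow_pos_of_pos (Stmt10Aux.one_sub_sq_pos hz) β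
    rw [← one_div, le_div_iff₀ hBp, mul_comm]
    exact hfb z hz
  have rev : ∀ M : ℝ, (∀ z ∈ UD, (1 - ‖z‖ ^ 2) * ‖u z‖ ≤ M * (1 - ‖φ z‖ ^ 2) ^ β) →
      ∀ f : ℂ → ℂ, DifferentiableOn ℂ f UD →
      (∀ z ∈ UD, (1 - ‖z‖ ^ 2) ^ β * ‖f z‖ ≤ 1) →
      ∀ z ∈ UD, (1 - ‖z‖ ^ 2) * ‖u z * f (φ z)‖ ≤ M := by
    intro M hM f hf hfb z hz
    have hφz := hφm hz
    have hBp : 0 < (1 - ‖φ z‖ ^ 2) ^ β :=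
      Real.rpow_pos_of_pos (Stmt10Aux.one_sub_sq_pos hφz) β
    have h2 : ‖f (φ z)‖ ≤ ((1 - ‖φ z‖ ^ 2) ^ β)⁻¹ := hfinv f hfb (φ z) hφz
    have hnn : 0 ≤ (1 - ‖z‖ ^ 2) * ‖u z‖ :=
      mul_nonneg (Stmt10Aux.one_sub_sq_pos hz).le (norm_nonneg _)
    calc (1 - ‖z‖ ^ 2) * ‖u z * f (φ z)‖
        = (1 - ‖z‖ ^ 2) * ‖u z‖ * ‖f (φ z)‖ := by rw [norm_mul, mul_assoc]
      _ ≤ M * (1 - ‖φ z‖ ^ 2) ^ β * ((1 - ‖φ z‖ ^ 2) ^ β)⁻¹ :=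
          mul_le_mul (hM z hz) h2 (norm_nonneg _) (hnn.trans (hM z hz))
      _ = M := by rw [mul_assoc, mul_inv_cancel₀ hBp.ne', mul_one]
  refine ⟨⟨fun ⟨C, hC⟩ => ⟨C, key C hC⟩, fun ⟨M, hM⟩ => ⟨M, rev M hM⟩⟩, ?_⟩
  rintro ⟨C, hC⟩ -
  have hMC := key C hC
  have gleC : ∀ z ∈ UD, (1 - ‖z‖ ^ 2) * ‖u z‖ / (1 - ‖φ z‖ ^ 2) ^ β ≤ C := by
    intro z hz
    have hBp : 0 < (1 - ‖φ z‖ ^ 2) ^ β :=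
      Real.rpow_pos_of_pos (Stmt10Aux.one_sub_sq_pos (hφm hz)) β
    exact (div_le_iff₀ hBp).mpr (hMC z hz)
  have gnn : ∀ z ∈ UD, 0 ≤ (1 - ‖z‖ ^ 2) * ‖u z‖ / (1 - ‖φ z‖ ^ 2) ^ β := by
    intro z hz
    exact div_nonneg (mul_nonneg (Stmt10Aux.one_sub_sq_pos hz).le (norm_nonneg _))
      (Real.rpow_nonneg (Stmt10Aux.one_sub_sq_pos (hφm hz)).le β)
  have innerEq : ∀ (h : ℂ → ℝ) (z : ℂ), z ∈ UD → (⨆ _ : z ∈ UD, h z) = h z := by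
    intro h z hz
    haveI : Nonempty (z ∈ UD) := ⟨hz⟩
    exact ciSup_const
  have innerLe : ∀ (h : ℂ → ℝ) (c : ℝ), 0 ≤ c → ∀ z : ℂ,
      (z ∈ UD → h z ≤ c) → (⨆ _ : z ∈ UD, h z) ≤ c := by
    intro h c hc z hzc
    by_cases hz : z ∈ UD
    · rw [innerEq h z hz]; exact hzc hz
    · haveI : IsEmpty (z ∈ UD) := isEmpty_Prop.mpr hz
      rw [Real.iSup_of_isEmpty]; exact hc
  have hS0 : 0 ≤ ⨆ z, ⨆ _ : z ∈ UD, (1 - ‖z‖ ^ 2) * ‖u z‖ / (1 - ‖φ z‖ ^ 2) ^ β :=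
    Real.iSup_nonneg fun z => Real.iSup_nonneg fun hz => gnn z hz
  have leSup : ∀ h : ℂ → ℝ, BddAbove (Set.range fun z => ⨆ _ : z ∈ UD, h z) →
      ∀ z ∈ UD, h z ≤ ⨆ z, ⨆ _ : z ∈ UD, h z := by
    intro h hb z hz
    have := le_ciSup hb z
    rwa [innerEq h z hz] at this
  have bddRange : ∀ h : ℂ → ℝ, (∀ z ∈ UD, h z ≤ C) →
      BddAbove (Set.range fun z => ⨆ _ : z ∈ UD, h z) := by
    intro h hh
    refine ⟨max C 0, ?_⟩
    rintro y ⟨z, rfl⟩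
    exact innerLe h (max C 0) (le_max_right C 0) z fun hz => (hh z hz).trans (le_max_left C 0)
  have bddA : BddAbove {y : ℝ | ∃ f : ℂ → ℂ, DifferentiableOn ℂ f UD ∧
      (∀ z ∈ UD, (1 - ‖z‖ ^ 2) ^ β * ‖f z‖ ≤ 1) ∧
      y = ⨆ z ∈ UD, (1 - ‖z‖ ^ 2) * ‖u z * f (φ z)‖} := by
    refine ⟨max C 0, ?_⟩
    rintro y ⟨f, hfd, hfb, rfl⟩
    refine Real.iSup_le (fun z => ?_) (le_max_right C 0)
    exact innerLe (fun z => (1 - ‖z‖ ^ 2) * ‖u z * f (φ z)‖) (max C 0) (le_max_right C 0) z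
      fun hz => (hC f hfd hfb z hz).trans (le_max_left C 0)
  have memA : ∀ w ∈ UD,
      (⨆ z ∈ UD, (1 - ‖z‖ ^ 2) * ‖u z * Stmt10Aux.testF β (φ w) (φ z)‖) ∈
      {y : ℝ | ∃ f : ℂ → ℂ, DifferentiableOn ℂ f UD ∧
        (∀ z ∈ UD, (1 - ‖z‖ ^ 2) ^ β * ‖f z‖ ≤ 1) ∧
        y = ⨆ z ∈ UD, (1 - ‖z‖ ^ 2) * ‖u z * f (φ z)‖} := by
    intro w hw
    exact ⟨Stmt10Aux.testF β (φ w), Stmt10Aux.testF_diff β (hφm hw),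
      fun y hy => Stmt10Aux.testF_bound hβ (hφm hw) hy, rfl⟩
  have h0A : 0 ≤ sSup {y : ℝ | ∃ f : ℂ → ℂ, DifferentiableOn ℂ f UD ∧
      (∀ z ∈ UD, (1 - ‖z‖ ^ 2) ^ β * ‖f z‖ ≤ 1) ∧
      y = ⨆ z ∈ UD, (1 - ‖z‖ ^ 2) * ‖u z * f (φ z)‖} := by
    refine le_trans ?_ (le_csSup bddA (memA 0 hUD0))
    exact Real.iSup_nonneg fun z => Real.iSup_nonneg fun hz =>
      mul_nonneg (Stmt10Aux.one_sub_sq_pos hz).le (norm_nonneg _)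
  apply le_antisymm
  · refine Real.sSup_le ?_ hS0
    rintro y ⟨f, hfd, hfb, rfl⟩
    refine Real.iSup_le (fun z => Real.iSup_le (fun hz => ?_) hS0) hS0
    have hφz := hφm hz
    have hBp : 0 < (1 - ‖φ z‖ ^ 2) ^ β :=
      Real.rpow_pos_of_pos (Stmt10Aux.one_sub_sq_pos hφz) β
    have h2 : ‖f (φ z)‖ ≤ ((1 - ‖φ z‖ ^ 2) ^ β)⁻¹ := hfinv f hfb (φ z) hφz
    have hnn : 0 ≤ (1 - ‖z‖ ^ 2) * ‖u z‖ :=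
      mul_nonneg (Stmt10Aux.one_sub_sq_pos hz).le (norm_nonneg _)
    have hEg : (1 - ‖z‖ ^ 2) * ‖u z * f (φ z)‖ ≤
        (1 - ‖z‖ ^ 2) * ‖u z‖ / (1 - ‖φ z‖ ^ 2) ^ β := by
      calc (1 - ‖z‖ ^ 2) * ‖u z * f (φ z)‖
          = (1 - ‖z‖ ^ 2) * ‖u z‖ * ‖f (φ z)‖ := by rw [norm_mul, mul_assoc]
        _ ≤ (1 - ‖z‖ ^ 2) * ‖u z‖ * ((1 - ‖φ z‖ ^ 2) ^ β)⁻¹ :=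
            mul_le_mul_of_nonneg_left h2 hnn
        _ = (1 - ‖z‖ ^ 2) * ‖u z‖ / (1 - ‖φ z‖ ^ 2) ^ β := (div_eq_mul_inv _ _).symm
    exact hEg.trans (leSup _ (bddRange _ gleC) z hz)
  · refine Real.iSup_le (fun z => Real.iSup_le (fun hz => ?_) h0A) h0A
    have hφz := hφm hz
    have heq : (1 - ‖z‖ ^ 2) * ‖u z‖ / (1 - ‖φ z‖ ^ 2) ^ β =
        (1 - ‖z‖ ^ 2) * ‖u z * Stmt10Aux.testF β (φ z) (φ z)‖ := by
      rw [norm_mul, Stmt10Aux.testF_at β hφz]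
      ring
    rw [heq]
    have hfam := bddRange (fun z' => (1 - ‖z'‖ ^ 2) * ‖u z' * Stmt10Aux.testF β (φ z) (φ z')‖)
      (fun z' hz' => hC _ (Stmt10Aux.testF_diff β hφz)
        (fun y hy => Stmt10Aux.testF_bound hβ hφz hy) z' hz')
    exact (leSup _ hfam z hz).trans (le_csSup bddA (memA z hz))
end
end

section
/- Let β > 0 and v_β(z) = (1-|z|^2)^β, v₁(z) = 1-|z|^2. For u analytic on D and φ: D → D analytic, the condition sup_{z∈D}(1-|z|^2)|u(z)|/(1-|φ(z)|^2)^β < ∞ holds if and only if sup_{k≥0} ||u·φ^k||_{v₁} / ||z^k||_{v_β} < ∞, and the two suprema are comparable up to constants depending only on β. -/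
open MeasureTheory Set Filter Topology Metric

noncomputable section

/-- `‖z^k‖_{v_β} = sup_{w∈D} |w|^k (1-|w|^2)^β`. -/
def monNorm (β : ℝ) (k : ℕ) : ℝ := ⨆ w ∈ UD, ‖w‖ ^ k * (1 - ‖w‖ ^ 2) ^ β

lemma mem_UD_iff {z : ℂ} : z ∈ UD ↔ ‖z‖ < 1 := by
  simp [UD, mem_ball_zero_iff]

lemma term_nonneg (β : ℝ) (k : ℕ) {w : ℂ} (hw : w ∈ UD) :
    0 ≤ ‖w‖ ^ k * (1 - ‖w‖ ^ 2) ^ β := by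
  have h1 : ‖w‖ < 1 := mem_UD_iff.mp hw
  have h2 : (0:ℝ) ≤ 1 - ‖w‖ ^ 2 := by nlinarith [norm_nonneg w]
  exact mul_nonneg (pow_nonneg (norm_nonneg w) k) (Real.rpow_nonneg h2 β)

lemma term_le_one {β : ℝ} (hβ : 0 ≤ β) (k : ℕ) {w : ℂ} (hw : w ∈ UD) :
    ‖w‖ ^ k * (1 - ‖w‖ ^ 2) ^ β ≤ 1 := by
  have h1 : ‖w‖ < 1 := mem_UD_iff.mp hw
  have h2 : (0:ℝ) ≤ 1 - ‖w‖ ^ 2 := by nlinarith [norm_nonneg w]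
  have h3 : 1 - ‖w‖ ^ 2 ≤ 1 := by nlinarith [norm_nonneg w]
  have h4 : ‖w‖ ^ k ≤ 1 := pow_le_one₀ (norm_nonneg w) h1.le
  have h5 : (1 - ‖w‖ ^ 2) ^ β ≤ 1 := Real.rpow_le_one h2 h3 hβ
  have h6 : (0:ℝ) ≤ (1 - ‖w‖ ^ 2) ^ β := Real.rpow_nonneg h2 β
  nlinarith [pow_nonneg (norm_nonneg w) k]

lemma monNorm_nonneg (β : ℝ) (k : ℕ) : 0 ≤ monNorm β k := by
  refine Real.iSup_nonneg fun w => Real.iSup_nonneg fun hw => term_nonneg β k hw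

lemma monNorm_le {β : ℝ} {k : ℕ} {B : ℝ} (hB : 0 ≤ B)
    (h : ∀ w ∈ UD, ‖w‖ ^ k * (1 - ‖w‖ ^ 2) ^ β ≤ B) : monNorm β k ≤ B :=
  Real.iSup_le (fun w => Real.iSup_le (fun hw => h w hw) hB) hB

lemma le_monNorm {β : ℝ} (hβ : 0 ≤ β) (k : ℕ) {w : ℂ} (hw : w ∈ UD) :
    ‖w‖ ^ k * (1 - ‖w‖ ^ 2) ^ β ≤ monNorm β k := by
  have hb : BddAbove (Set.range fun v : ℂ => ⨆ _ : v ∈ UD, ‖v‖ ^ k * (1 - ‖v‖ ^ 2) ^ β) := by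
    refine ⟨1, ?_⟩
    rintro x ⟨v, rfl⟩
    exact Real.iSup_le (fun hv => term_le_one hβ k hv) zero_le_one
  calc ‖w‖ ^ k * (1 - ‖w‖ ^ 2) ^ β
      = ⨆ _ : w ∈ UD, ‖w‖ ^ k * (1 - ‖w‖ ^ 2) ^ β :=
        (ciSup_pos (f := fun _ : w ∈ UD => ‖w‖ ^ k * (1 - ‖w‖ ^ 2) ^ β) hw).symm
    _ ≤ monNorm β k := le_ciSup hb w

lemma rpow_le_exp_aux {β x : ℝ} (hβ : 0 < β) (hx : 0 ≤ x) :
    x ^ β ≤ β ^ β * Real.exp x := by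
  rcases le_or_gt x β with h | h
  · have h1 : x ^ β ≤ β ^ β := Real.rpow_le_rpow hx h hβ.le
    have h2 : (1:ℝ) ≤ Real.exp x := Real.one_le_exp hx
    nlinarith [Real.rpow_nonneg hβ.le β]
  · have hx0 : 0 < x := hβ.trans h
    have hq : 0 < x / β := by positivity
    have h1 : (x / β) ^ β = Real.exp (Real.log (x / β) * β) := Real.rpow_def_of_pos hq β
    have h2 : Real.log (x / β) ≤ x / β - 1 := Real.log_le_sub_one_of_pos hq
    have h3 : Real.log (x / β) * β ≤ x := by
      have := mul_le_mul_of_nonneg_right h2 hβ.le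
      have hd : (x / β - 1) * β = x - β := by field_simp
      nlinarith
    have h4 : (x / β) ^ β ≤ Real.exp x := by
      rw [h1]; exact Real.exp_le_exp.mpr h3
    have h5 : x ^ β = β ^ β * (x / β) ^ β := by
      rw [← Real.mul_rpow hβ.le hq.le]
      congr 1
      field_simp
    rw [h5]
    exact mul_le_mul_of_nonneg_left h4 (Real.rpow_nonneg hβ.le β)

lemma key_bound {β : ℝ} (hβ : 0 < β) {r : ℝ} (hr0 : 0 ≤ r) (hr1 : r < 1)
    {k : ℕ} (hk : 1 ≤ k) :
    r ^ k * (1 - r ^ 2) ^ β ≤ (2 * β / k) ^ β := by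
  set a := 1 - r ^ 2 with ha
  have ha0 : 0 < a := by nlinarith
  have hkR : (0:ℝ) < k := by exact_mod_cast hk
  -- r ≤ exp(-(a/2))
  have hE : Real.exp (-(a / 2)) ^ 2 = Real.exp (-a) := by
    rw [← Real.exp_nat_mul]; congr 1; push_cast; ring
  have hr2 : r ^ 2 ≤ Real.exp (-(a / 2)) ^ 2 := by
    rw [hE]
    have := Real.add_one_le_exp (-a)
    nlinarith
  have hrle : r ≤ Real.exp (-(a / 2)) := by
    nlinarith [Real.exp_pos (-(a / 2)), sq_nonneg (r - Real.exp (-(a / 2))),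
      sq_nonneg (r + Real.exp (-(a / 2)))]
  have hrk : r ^ k ≤ Real.exp (-(a * k / 2)) := by
    calc r ^ k ≤ Real.exp (-(a / 2)) ^ k := pow_le_pow_left₀ hr0 hrle k
      _ = Real.exp (-(a * k / 2)) := by
          rw [← Real.exp_nat_mul]; ring_nf
  -- a^β ≤ (2/k)^β β^β exp(ak/2)
  have hx : (0:ℝ) ≤ a * k / 2 := by positivity
  have h1 : (a * k / 2) ^ β ≤ β ^ β * Real.exp (a * k / 2) := rpow_le_exp_aux hβ hx
  have h2 : a ^ β = (2 / k) ^ β * (a * k / 2) ^ β := by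
    rw [← Real.mul_rpow (by positivity) hx]
    congr 1
    field_simp
  have h3 : a ^ β ≤ (2 / k) ^ β * (β ^ β * Real.exp (a * k / 2)) := by
    rw [h2]
    exact mul_le_mul_of_nonneg_left h1 (Real.rpow_nonneg (by positivity) β)
  have hexp : Real.exp (-(a * k / 2)) * Real.exp (a * k / 2) = 1 := by
    rw [← Real.exp_add]; simp
  have h4 : (2 / k : ℝ) ^ β * β ^ β = (2 * β / k) ^ β := by
    rw [← Real.mul_rpow (by positivity) hβ.le]
    congr 1
    ring
  calc r ^ k * a ^ β
      ≤ Real.exp (-(a * k / 2)) * ((2 / k) ^ β * (β ^ β * Real.exp (a * k / 2))) := by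
        apply mul_le_mul hrk h3 (Real.rpow_nonneg ha0.le β) (Real.exp_pos _).le
    _ = (2 / k) ^ β * β ^ β * (Real.exp (-(a * k / 2)) * Real.exp (a * k / 2)) := by ring
    _ = (2 * β / k) ^ β := by rw [hexp, h4, mul_one]

lemma monNorm_le_key {β : ℝ} (hβ : 0 < β) {k : ℕ} (hk : 1 ≤ k) :
    monNorm β k ≤ (2 * β / k) ^ β := by
  refine monNorm_le (Real.rpow_nonneg (by positivity) β) fun w hw => ?_
  exact key_bound hβ (norm_nonneg w) (mem_UD_iff.mp hw) hk

lemma monNorm_zero_le_one {β : ℝ} (hβ : 0 < β) : monNorm β 0 ≤ 1 :=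
  monNorm_le zero_le_one fun w hw => term_le_one hβ.le 0 hw

lemma one_le_monNorm_zero {β : ℝ} (hβ : 0 < β) : 1 ≤ monNorm β 0 := by
  have h0 : (0:ℂ) ∈ UD := by simp [UD]
  have := le_monNorm hβ.le 0 h0
  simpa using this

lemma zero_mem_UD : (0:ℂ) ∈ UD := by simp [UD]

/-- `sup_{z∈D}(1-|z|^2)|u(z)|/(1-|φ(z)|^2)^β < ∞` iff
`sup_{k≥0} ‖uφ^k‖_{v₁}/‖z^k‖_{v_β} < ∞`, with two-sided comparability of the bounds by a
constant depending only on `β`. -/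
theorem stmt11 (β : ℝ) (hβ : 0 < β) :
    ∃ C : ℝ, 0 < C ∧
      ∀ u φ : ℂ → ℂ, DifferentiableOn ℂ u UD → DifferentiableOn ℂ φ UD → MapsTo φ UD UD →
        ((∃ M : ℝ, ∀ z ∈ UD, (1 - ‖z‖ ^ 2) * ‖u z‖ ≤ M * (1 - ‖φ z‖ ^ 2) ^ β) ↔
          (∃ M : ℝ, ∀ k : ℕ, ∀ z ∈ UD,
            (1 - ‖z‖ ^ 2) * ‖u z * φ z ^ k‖ ≤ M * monNorm β k)) ∧
        ∀ M : ℝ, 0 ≤ M →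
          ((∀ z ∈ UD, (1 - ‖z‖ ^ 2) * ‖u z‖ ≤ M * (1 - ‖φ z‖ ^ 2) ^ β) →
            ∀ k : ℕ, ∀ z ∈ UD, (1 - ‖z‖ ^ 2) * ‖u z * φ z ^ k‖ ≤ (C * M) * monNorm β k) ∧
          ((∀ k : ℕ, ∀ z ∈ UD, (1 - ‖z‖ ^ 2) * ‖u z * φ z ^ k‖ ≤ M * monNorm β k) →
            ∀ z ∈ UD, (1 - ‖z‖ ^ 2) * ‖u z‖ ≤ (C * M) * (1 - ‖φ z‖ ^ 2) ^ β) := by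
  set C : ℝ := Real.exp (4 * β + 1) with hCdef
  have hCpos : 0 < C := Real.exp_pos _
  have hC1 : 1 ≤ C := Real.one_le_exp (by linarith)
  have h2C : (2:ℝ) ^ β ≤ C := by
    rw [Real.rpow_def_of_pos two_pos, hCdef]
    apply Real.exp_le_exp.mpr
    have hl2 : Real.log 2 ≤ 1 := by
      have := Real.log_le_sub_one_of_pos (by norm_num : (0:ℝ) < 2)
      linarith
    nlinarith
  refine ⟨C, hCpos, ?_⟩
  intro u φ hu hφ hm
  have fwd : ∀ M : ℝ, 0 ≤ M →
      (∀ z ∈ UD, (1 - ‖z‖ ^ 2) * ‖u z‖ ≤ M * (1 - ‖φ z‖ ^ 2) ^ β) →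
      ∀ k : ℕ, ∀ z ∈ UD, (1 - ‖z‖ ^ 2) * ‖u z * φ z ^ k‖ ≤ (C * M) * monNorm β k := by
    intro M hM0 H k z hz
    have hφz : φ z ∈ UD := hm hz
    rw [norm_mul, norm_pow]
    have hpk : (0:ℝ) ≤ ‖φ z‖ ^ k := pow_nonneg (norm_nonneg _) k
    calc (1 - ‖z‖ ^ 2) * (‖u z‖ * ‖φ z‖ ^ k)
        = ((1 - ‖z‖ ^ 2) * ‖u z‖) * ‖φ z‖ ^ k := by ring
      _ ≤ (M * (1 - ‖φ z‖ ^ 2) ^ β) * ‖φ z‖ ^ k :=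
          mul_le_mul_of_nonneg_right (H z hz) hpk
      _ = M * (‖φ z‖ ^ k * (1 - ‖φ z‖ ^ 2) ^ β) := by ring
      _ ≤ M * monNorm β k := mul_le_mul_of_nonneg_left (le_monNorm hβ.le k hφz) hM0
      _ ≤ (C * M) * monNorm β k := by
          apply mul_le_mul_of_nonneg_right _ (monNorm_nonneg β k)
          nlinarith
  have bwd : ∀ M : ℝ, 0 ≤ M →
      (∀ k : ℕ, ∀ z ∈ UD, (1 - ‖z‖ ^ 2) * ‖u z * φ z ^ k‖ ≤ M * monNorm β k) →
      ∀ z ∈ UD, (1 - ‖z‖ ^ 2) * ‖u z‖ ≤ (C * M) * (1 - ‖φ z‖ ^ 2) ^ β := by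
    intro M hM0 H z hz
    have hφz : φ z ∈ UD := hm hz
    have hz1 : ‖z‖ < 1 := mem_UD_iff.mp hz
    set t : ℝ := ‖φ z‖ with htdef
    have ht0 : 0 ≤ t := norm_nonneg _
    have ht1 : t < 1 := mem_UD_iff.mp hφz
    set a : ℝ := 1 - t ^ 2 with hadef
    have ha0 : 0 < a := by nlinarith
    have ha1 : a ≤ 1 := by nlinarith
    set X : ℝ := (1 - ‖z‖ ^ 2) * ‖u z‖ with hXdef
    have hX0 : 0 ≤ X := mul_nonneg (by nlinarith [norm_nonneg z]) (norm_nonneg _)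
    have hXt : ∀ k : ℕ, X * t ^ k ≤ M * monNorm β k := by
      intro k
      have := H k z hz
      rw [norm_mul, norm_pow] at this
      calc X * t ^ k = (1 - ‖z‖ ^ 2) * (‖u z‖ * ‖φ z‖ ^ k) := by rw [hXdef]; ring
        _ ≤ M * monNorm β k := this
    have haβ : (0:ℝ) ≤ a ^ β := Real.rpow_nonneg ha0.le β
    rcases le_or_gt (1/2 : ℝ) a with hca | hca
    · -- big a : use k = 0
      have h0 : X ≤ M := by
        have := hXt 0
        simp only [pow_zero, mul_one] at this
        calc X ≤ M * monNorm β 0 := this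
          _ ≤ M * 1 := mul_le_mul_of_nonneg_left (monNorm_zero_le_one hβ) hM0
          _ = M := mul_one M
      have h1 : (1:ℝ) ≤ (2 * a) ^ β := by
        calc (1:ℝ) = 1 ^ β := (Real.one_rpow β).symm
          _ ≤ (2 * a) ^ β := Real.rpow_le_rpow zero_le_one (by linarith) hβ.le
      have h2 : (2 * a : ℝ) ^ β = 2 ^ β * a ^ β := Real.mul_rpow (by norm_num) ha0.le
      have h3 : (1:ℝ) ≤ C * a ^ β := by
        calc (1:ℝ) ≤ (2 * a) ^ β := h1
          _ = 2 ^ β * a ^ β := h2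
          _ ≤ C * a ^ β := mul_le_mul_of_nonneg_right h2C haβ
      calc X ≤ M := h0
        _ = M * 1 := (mul_one M).symm
        _ ≤ M * (C * a ^ β) := mul_le_mul_of_nonneg_left h3 hM0
        _ = (C * M) * a ^ β := by ring
    · -- small a
      set k : ℕ := ⌈2 * β / a⌉₊ with hkdef
      have hq0 : 0 < 2 * β / a := by positivity
      have hk1 : 1 ≤ k := Nat.one_le_iff_ne_zero.mpr (by
        simp only [hkdef, ne_eq, Nat.ceil_eq_zero, not_le]
        exact hq0)
      have hkR : (0:ℝ) < k := by exact_mod_cast hk1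
      have hkge : 2 * β / a ≤ (k : ℝ) := Nat.le_ceil _
      have hkle : (k : ℝ) ≤ 2 * β / a + 1 := by
        have := Nat.ceil_lt_add_one hq0.le
        exact le_of_lt this
      -- monNorm bound
      have hmon : monNorm β k ≤ a ^ β := by
        calc monNorm β k ≤ (2 * β / k) ^ β := monNorm_le_key hβ hk1
          _ ≤ a ^ β := by
              apply Real.rpow_le_rpow (by positivity) _ hβ.le
              rw [div_le_iff₀ hkR]
              calc 2 * β = (2 * β / a) * a := by field_simp
                _ ≤ (k : ℝ) * a := mul_le_mul_of_nonneg_right hkge ha0.le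
                _ = a * k := by ring
      -- lower bound on t^k
      have hak : a * k ≤ 2 * β + a := by
        calc a * k ≤ a * (2 * β / a + 1) := mul_le_mul_of_nonneg_left hkle ha0.le
          _ = 2 * β + a := by field_simp
      have hexp1 : Real.exp (-(2 * a)) ≤ 1 - a := by
        have he : (1:ℝ) ≤ (1 - a) * Real.exp (2 * a) := by
          nlinarith [Real.add_one_le_exp (2 * a)]
        calc Real.exp (-(2 * a)) = Real.exp (-(2 * a)) * 1 := (mul_one _).symm
          _ ≤ Real.exp (-(2 * a)) * ((1 - a) * Real.exp (2 * a)) :=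
              mul_le_mul_of_nonneg_left he (Real.exp_pos _).le
          _ = (1 - a) * (Real.exp (-(2 * a)) * Real.exp (2 * a)) := by ring
          _ = 1 - a := by rw [← Real.exp_add]; simp
      have htk : Real.exp (-(4 * β + 1)) ≤ t ^ k := by
        have h1 : t ^ (2 * k) ≤ t ^ k :=
          pow_le_pow_of_le_one ht0 ht1.le (Nat.le_mul_of_pos_left k (by norm_num))
        have h2 : Real.exp (-(2 * a)) ^ k ≤ (t ^ 2) ^ k := by
          apply pow_le_pow_left₀ (Real.exp_pos _).le
          calc Real.exp (-(2 * a)) ≤ 1 - a := hexp1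
            _ = t ^ 2 := by rw [hadef]; ring
        have h3 : (t ^ 2) ^ k = t ^ (2 * k) := by rw [← pow_mul]
        have h4 : Real.exp (-(2 * a)) ^ k = Real.exp (-(2 * a * k)) := by
          rw [← Real.exp_nat_mul]; ring_nf
        have h5 : Real.exp (-(4 * β + 1)) ≤ Real.exp (-(2 * a * k)) := by
          apply Real.exp_le_exp.mpr
          nlinarith
        calc Real.exp (-(4 * β + 1)) ≤ Real.exp (-(2 * a * k)) := h5
          _ = Real.exp (-(2 * a)) ^ k := h4.symm
          _ ≤ (t ^ 2) ^ k := h2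
          _ = t ^ (2 * k) := h3
          _ ≤ t ^ k := h1
      -- combine
      have hmain : X * Real.exp (-(4 * β + 1)) ≤ M * a ^ β := by
        calc X * Real.exp (-(4 * β + 1)) ≤ X * t ^ k :=
            mul_le_mul_of_nonneg_left htk hX0
          _ ≤ M * monNorm β k := hXt k
          _ ≤ M * a ^ β := mul_le_mul_of_nonneg_left hmon hM0
      have hcancel : Real.exp (-(4 * β + 1)) * C = 1 := by
        rw [hCdef, ← Real.exp_add]
        rw [show -(4 * β + 1) + (4 * β + 1) = 0 by ring, Real.exp_zero]
      calc X = X * (Real.exp (-(4 * β + 1)) * C) := by rw [hcancel, mul_one]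
        _ = (X * Real.exp (-(4 * β + 1))) * C := by ring
        _ ≤ (M * a ^ β) * C := mul_le_mul_of_nonneg_right hmain hCpos.le
        _ = (C * M) * a ^ β := by ring
  refine ⟨⟨?_, ?_⟩, fun M hM => ⟨fwd M hM, bwd M hM⟩⟩
  · rintro ⟨M, hM⟩
    have hM0 : 0 ≤ M := by
      have h0 := hM 0 zero_mem_UD
      have hφ0 : ‖φ 0‖ < 1 := mem_UD_iff.mp (hm zero_mem_UD)
      have hp : (0:ℝ) < (1 - ‖φ 0‖ ^ 2) ^ β :=
        Real.rpow_pos_of_pos (by nlinarith [norm_nonneg (φ 0)]) β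
      have hL : (0:ℝ) ≤ (1 - ‖(0:ℂ)‖ ^ 2) * ‖u 0‖ := by
        simp [mul_nonneg, norm_nonneg]
      by_contra hc
      push_neg at hc
      nlinarith
    exact ⟨C * M, fwd M hM0 hM⟩
  · rintro ⟨M, hM⟩
    have hM0 : 0 ≤ M := by
      have h0 := hM 0 0 zero_mem_UD
      simp only [pow_zero, mul_one] at h0
      have hL : (0:ℝ) ≤ (1 - ‖(0:ℂ)‖ ^ 2) * ‖u 0‖ := by
        simp [mul_nonneg, norm_nonneg]
      have hmp : (0:ℝ) < monNorm β 0 := lt_of_lt_of_le one_pos (one_le_monNorm_zero hβ)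
      by_contra hc
      push_neg at hc
      nlinarith
    exact ⟨C * M, bwd M hM0 hM⟩
end
end

section
/- Let φ be an analytic self-map of D and 1 ≤ p < ∞, α > -1. Then sup_{z∈D}(1-|z|^2)|φ'(z)|/(1-|φ(z)|^2)^{(2+α+p)/p} < ∞ if and only if sup_{j≥1} j^{(α+2)/p}||φ^j||_B < ∞, where ||φ^j||_B is the Bloch norm of the j-th power of φ. -/
open MeasureTheory Set Filter Topology Metric

noncomputable section

lemma aux_xm (m x : ℝ) (hm : 0 ≤ m) (hx0 : 0 ≤ x) (hx1 : x ≤ 1) :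
    x ^ m * (1 - x) * (m + 1) ≤ 1 := by
  have hm1 : (0:ℝ) < m + 1 := by linarith
  have hw : m / (m+1) + 1 / (m+1) = 1 := by field_simp
  have hx2 : (0:ℝ) ≤ (m+1)*(1-x) := by nlinarith
  have h := Real.geom_mean_le_arith_mean2_weighted
    (by positivity : (0:ℝ) ≤ m/(m+1)) (by positivity : (0:ℝ) ≤ 1/(m+1))
    hx0 hx2 hw
  have hrhs : m/(m+1)*x + 1/(m+1)*((m+1)*(1-x)) ≤ 1 := by
    have e : 1/(m+1)*((m+1)*(1-x)) = 1 - x := by field_simp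
    rw [e]
    have : m/(m+1)*x ≤ x := by
      have h1 : m/(m+1) ≤ 1 := by rw [div_le_one hm1]; linarith
      nlinarith
    linarith
  have h2 : x ^ (m/(m+1)) * ((m+1)*(1-x)) ^ (1/(m+1)) ≤ 1 := h.trans hrhs
  have h3 := Real.rpow_le_rpow
    (mul_nonneg (Real.rpow_nonneg hx0 _) (Real.rpow_nonneg hx2 _)) h2 (le_of_lt hm1)
  rw [Real.one_rpow,
    Real.mul_rpow (Real.rpow_nonneg hx0 _) (Real.rpow_nonneg hx2 _),
    ← Real.rpow_mul hx0, ← Real.rpow_mul hx2] at h3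
  have e1 : m / (m+1) * (m+1) = m := by field_simp
  have e2 : 1 / (m+1) * (m+1) = 1 := by field_simp
  rw [e1, e2, Real.rpow_one] at h3
  calc x ^ m * (1 - x) * (m + 1) = x ^ m * ((m+1)*(1-x)) := by ring
    _ ≤ 1 := h3

lemma aux_key (β : ℝ) (hβ : 0 < β) (j : ℕ) (hj : 1 ≤ j) (x : ℝ) (hx0 : 0 ≤ x) (hx1 : x ≤ 1) :
    (j:ℝ) ^ β * x ^ (j-1) * (1 - x^2) ^ β ≤ 2 ^ β * max 1 β ^ β := by
  have hj1 : (1:ℝ) ≤ (j:ℝ) := by exact_mod_cast hj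
  set m : ℝ := ((j:ℝ) - 1) / β with hm
  have hm0 : 0 ≤ m := by
    apply div_nonneg (by linarith) hβ.le
  have hx2 : (0:ℝ) ≤ 1 - x := by linarith
  have h1 : x ^ m * (1 - x) * (m + 1) ≤ 1 := aux_xm m x hm0 hx0 hx1
  have hm1 : (0:ℝ) < m + 1 := by linarith
  have h2 : x ^ m * (1 - x) ≤ 1/(m+1) := (le_div_iff₀ hm1).mpr h1
  have h3 : (x ^ m * (1 - x)) ^ β ≤ (1/(m+1)) ^ β :=
    Real.rpow_le_rpow (mul_nonneg (Real.rpow_nonneg hx0 _) hx2) h2 hβ.le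
  have e1 : (x ^ m * (1 - x)) ^ β = x ^ (j-1) * (1 - x) ^ β := by
    rw [Real.mul_rpow (Real.rpow_nonneg hx0 _) hx2, ← Real.rpow_mul hx0,
      ← Real.rpow_natCast x (j-1)]
    congr 1
    rw [hm, Nat.cast_sub hj]
    push_cast
    field_simp
  rw [e1] at h3
  have h5 : (j:ℝ)/(m+1) ≤ max 1 β := by
    rw [div_le_iff₀ hm1]
    rcases le_total β 1 with hβ1 | hβ1
    · rw [max_eq_left hβ1]
      have : (j:ℝ) - 1 ≤ m := by
        rw [hm, le_div_iff₀ hβ]; nlinarith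
      linarith
    · rw [max_eq_right hβ1]
      have hβm : β * m = (j:ℝ) - 1 := by rw [hm]; field_simp
      nlinarith
  have e2 : (j:ℝ)^β * (1/(m+1))^β = ((j:ℝ)/(m+1))^β := by
    rw [← Real.mul_rpow (by positivity) (by positivity), mul_one_div]
  have h6 : ((j:ℝ)/(m+1))^β ≤ max 1 β ^ β :=
    Real.rpow_le_rpow (by positivity) h5 hβ.le
  have h7 : (1 - x^2)^β ≤ 2^β * (1-x)^β := by
    rw [← Real.mul_rpow (by norm_num) hx2]
    apply Real.rpow_le_rpow (by nlinarith) (by nlinarith) hβ.le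
  have hxjn : (0:ℝ) ≤ x ^ (j-1) := pow_nonneg hx0 _
  calc (j:ℝ)^β * x^(j-1) * (1-x^2)^β
      ≤ (j:ℝ)^β * x^(j-1) * (2^β * (1-x)^β) := by
        apply mul_le_mul_of_nonneg_left h7
        exact mul_nonneg (Real.rpow_nonneg (by positivity) _) hxjn
    _ = 2^β * ((j:ℝ)^β * (x^(j-1) * (1-x)^β)) := by ring
    _ ≤ 2^β * ((j:ℝ)^β * (1/(m+1))^β) := by
        apply mul_le_mul_of_nonneg_left _ (Real.rpow_nonneg (by norm_num) _)
        exact mul_le_mul_of_nonneg_left h3 (Real.rpow_nonneg (by positivity) _)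
    _ = 2^β * ((j:ℝ)/(m+1))^β := by rw [e2]
    _ ≤ 2^β * max 1 β ^ β := mul_le_mul_of_nonneg_left h6 (Real.rpow_nonneg (by norm_num) _)

/-- `sup_{z∈D}(1-|z|^2)|φ'(z)|/(1-|φ(z)|^2)^{(2+α+p)/p} < ∞` iff
`sup_{j≥1} j^{(α+2)/p} ‖φ^j‖_B < ∞` (Bloch norm `‖g‖_B = |g(0)| + sup (1-|z|^2)|g'(z)|`). -/
theorem stmt14 (p α : ℝ) (hp : 1 ≤ p) (hα : -1 < α) (φ : ℂ → ℂ)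
    (hφ : DifferentiableOn ℂ φ UD) (hφm : MapsTo φ UD UD) :
    (∃ M : ℝ, ∀ z ∈ UD,
      (1 - ‖z‖ ^ 2) * ‖deriv φ z‖ ≤ M * (1 - ‖φ z‖ ^ 2) ^ ((2 + α + p) / p)) ↔
    (∃ M : ℝ, ∀ j : ℕ, 1 ≤ j → ∀ z ∈ UD,
      (j : ℝ) ^ ((α + 2) / p) * (‖φ 0 ^ j‖ + (1 - ‖z‖ ^ 2) * ‖deriv (φ ^ j) z‖) ≤ M) := by
  have hp0 : (0:ℝ) < p := lt_of_lt_of_le one_pos hp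
  set β : ℝ := (2 + α + p) / p with hβdef
  set γ : ℝ := (α + 2) / p with hγdef
  have hβ : 0 < β := div_pos (by linarith) hp0
  have hγ : 0 < γ := div_pos (by linarith) hp0
  have hβγ : β = γ + 1 := by
    rw [hβdef, hγdef]; field_simp; ring
  have hjpow : ∀ j : ℕ, 1 ≤ j → ((j:ℝ))^γ * (j:ℝ) = (j:ℝ)^β := by
    intro j hj
    have hjne : (j:ℝ) ≠ 0 := by positivity
    rw [hβγ, Real.rpow_add_one hjne]
  have hmem : ∀ y : ℂ, y ∈ UD ↔ ‖y‖ < 1 := by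
    intro y; simp [UD, mem_ball_zero_iff]
  have hderiv : ∀ j : ℕ, ∀ z ∈ UD, ‖deriv (φ ^ j) z‖ = (j:ℝ) * ‖φ z‖^(j-1) * ‖deriv φ z‖ := by
    intro j z hz
    have hz' : z ∈ Metric.ball (0:ℂ) 1 := hz
    have hd : DifferentiableAt ℂ φ z :=
      hφ.differentiableAt (Metric.isOpen_ball.mem_nhds hz')
    have e : deriv (φ ^ j) z = (j:ℂ) * φ z ^ (j-1) * deriv φ z := by
      have e2 : φ ^ j = fun w => φ w ^ j := rfl
      rw [e2, deriv_fun_pow hd j]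
    rw [e]
    simp [norm_mul, norm_pow]
  have h00 : (0:ℂ) ∈ UD := by simp [UD]
  have hφ0 : ‖φ 0‖ < 1 := (hmem _).mp (hφm h00)
  have hφ0sq : (0:ℝ) < 1 - ‖φ 0‖^2 := by nlinarith [norm_nonneg (φ 0)]
  constructor
  · rintro ⟨M₀, h₀⟩
    have hpos0 : (0:ℝ) < (1 - ‖φ 0‖^2)^β := Real.rpow_pos_of_pos hφ0sq β
    have hM₀ : 0 ≤ M₀ := by
      have h1 := h₀ 0 h00
      have h2 : (0:ℝ) ≤ (1 - ‖(0:ℂ)‖^2) * ‖deriv φ 0‖ := by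
        have : ‖(0:ℂ)‖ = 0 := norm_zero
        rw [this]; positivity
      nlinarith
    set C : ℝ := (2:ℝ)^β * max 1 β ^ β with hC
    have hC0 : 0 < C := by
      apply mul_pos (Real.rpow_pos_of_pos (by norm_num) _)
      exact Real.rpow_pos_of_pos (lt_of_lt_of_le one_pos (le_max_left 1 β)) _
    refine ⟨C / (1-‖φ 0‖^2)^β + C * M₀, ?_⟩
    intro j hj z hz
    have hz1 : ‖z‖ < 1 := (hmem z).mp hz
    have hw1 : ‖φ z‖ < 1 := (hmem _).mp (hφm hz)
    have hw0 : (0:ℝ) ≤ ‖φ z‖ := norm_nonneg _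
    have hjγβ : (j:ℝ)^γ ≤ (j:ℝ)^β :=
      Real.rpow_le_rpow_of_exponent_le (by exact_mod_cast hj) (by rw [hβγ]; linarith)
    -- part 1
    have part1 : (j:ℝ)^γ * ‖φ 0 ^ j‖ ≤ C / (1-‖φ 0‖^2)^β := by
      have e : ‖φ 0 ^ j‖ = ‖φ 0‖^j := norm_pow _ _
      rw [e]
      have s1 : ‖φ 0‖^j ≤ ‖φ 0‖^(j-1) :=
        pow_le_pow_of_le_one (norm_nonneg _) hφ0.le (Nat.sub_le j 1)
      have s2 : (j:ℝ)^γ * ‖φ 0‖^j ≤ (j:ℝ)^β * ‖φ 0‖^(j-1) :=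
        mul_le_mul hjγβ s1 (pow_nonneg (norm_nonneg _) _) (Real.rpow_nonneg (Nat.cast_nonneg j) _)
      have s3 : (j:ℝ)^β * ‖φ 0‖^(j-1) ≤ C / (1-‖φ 0‖^2)^β := by
        rw [le_div_iff₀ hpos0]
        exact aux_key β hβ j hj _ (norm_nonneg _) hφ0.le
      linarith
    -- part 2
    have part2 : (j:ℝ)^γ * ((1 - ‖z‖^2) * ‖deriv (φ ^ j) z‖) ≤ C * M₀ := by
      rw [hderiv j z hz]
      have e0 : (j:ℝ)^γ * ((1 - ‖z‖^2) * ((j:ℝ) * ‖φ z‖^(j-1) * ‖deriv φ z‖))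
          = ((j:ℝ)^γ * (j:ℝ)) * (‖φ z‖^(j-1) * ((1 - ‖z‖^2) * ‖deriv φ z‖)) := by ring
      rw [e0, hjpow j hj]
      have hnn : (0:ℝ) ≤ (j:ℝ)^β * ‖φ z‖^(j-1) :=
        mul_nonneg (Real.rpow_nonneg (Nat.cast_nonneg j) _) (pow_nonneg hw0 _)
      calc (j:ℝ)^β * (‖φ z‖^(j-1) * ((1 - ‖z‖^2) * ‖deriv φ z‖))
          = ((j:ℝ)^β * ‖φ z‖^(j-1)) * ((1 - ‖z‖^2) * ‖deriv φ z‖) := by ring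
        _ ≤ ((j:ℝ)^β * ‖φ z‖^(j-1)) * (M₀ * (1 - ‖φ z‖^2)^β) :=
            mul_le_mul_of_nonneg_left (h₀ z hz) hnn
        _ = M₀ * ((j:ℝ)^β * ‖φ z‖^(j-1) * (1 - ‖φ z‖^2)^β) := by ring
        _ ≤ M₀ * C := mul_le_mul_of_nonneg_left (aux_key β hβ j hj _ hw0 hw1.le) hM₀
        _ = C * M₀ := mul_comm _ _
    calc (j:ℝ)^γ * (‖φ 0 ^ j‖ + (1 - ‖z‖^2) * ‖deriv (φ ^ j) z‖)
        = (j:ℝ)^γ * ‖φ 0 ^ j‖ + (j:ℝ)^γ * ((1 - ‖z‖^2) * ‖deriv (φ ^ j) z‖) := by ring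
      _ ≤ C / (1-‖φ 0‖^2)^β + C * M₀ := add_le_add part1 part2
  · rintro ⟨M, h⟩
    have hM : 0 ≤ M := by
      have h1 := h 1 le_rfl 0 h00
      have hpos : (0:ℝ) ≤ ((1:ℕ):ℝ)^γ * (‖φ 0 ^ 1‖ + (1 - ‖(0:ℂ)‖^2) * ‖deriv (φ ^ 1) 0‖) := by
        have e : (1:ℝ) - ‖(0:ℂ)‖^2 = 1 := by simp
        rw [e]
        have : (0:ℝ) ≤ ((1:ℕ):ℝ)^γ := Real.rpow_nonneg (by norm_num) _
        have h2 : (0:ℝ) ≤ ‖φ 0 ^ 1‖ + 1 * ‖deriv (φ ^ 1) 0‖ := by positivity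
        exact mul_nonneg this h2
      linarith
    refine ⟨M * Real.exp 2 * (4/3:ℝ)^β, ?_⟩
    intro z hz
    have hz1 : ‖z‖ < 1 := (hmem z).mp hz
    have hw1 : ‖φ z‖ < 1 := (hmem _).mp (hφm hz)
    have hw0 : (0:ℝ) ≤ ‖φ z‖ := norm_nonneg _
    set w : ℝ := ‖φ z‖ with hwdef
    set A : ℝ := (1 - ‖z‖^2) * ‖deriv φ z‖ with hA
    have hz2 : (0:ℝ) ≤ 1 - ‖z‖^2 := by nlinarith [norm_nonneg z]
    have hA0 : 0 ≤ A := by rw [hA]; exact mul_nonneg hz2 (norm_nonneg _)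
    have hkeyM : ∀ j : ℕ, 1 ≤ j → (j:ℝ)^β * w^(j-1) * A ≤ M := by
      intro j hj
      have hj' := h j hj z hz
      rw [hderiv j z hz] at hj'
      have hnn : (0:ℝ) ≤ (j:ℝ)^γ := Real.rpow_nonneg (Nat.cast_nonneg j) γ
      have h1 : (j:ℝ)^γ * ((1-‖z‖^2) * ((j:ℝ) * w^(j-1) * ‖deriv φ z‖)) ≤ M := by
        refine le_trans ?_ hj'
        nlinarith [mul_nonneg hnn (norm_nonneg (φ 0 ^ j))]
      calc (j:ℝ)^β * w^(j-1) * A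
          = (j:ℝ)^γ * ((1-‖z‖^2) * ((j:ℝ) * w^(j-1) * ‖deriv φ z‖)) := by
            rw [hA, ← hjpow j hj]; ring
        _ ≤ M := h1
    have hw2pos : (0:ℝ) < 1 - w^2 := by nlinarith
    rcases le_or_gt w (1/2) with hw2 | hw2
    · have hA1 : A ≤ M := by
        have h1 := hkeyM 1 le_rfl
        simpa [Real.one_rpow] using h1
      have h34 : (3/4:ℝ)^β ≤ (1 - w^2)^β :=
        Real.rpow_le_rpow (by norm_num) (by nlinarith) hβ.le
      have hprod : (4/3:ℝ)^β * (3/4:ℝ)^β = 1 := by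
        rw [← Real.mul_rpow (by norm_num) (by norm_num)]
        norm_num
      have hexp : (1:ℝ) ≤ Real.exp 2 := Real.one_le_exp (by norm_num)
      calc A ≤ M := hA1
        _ ≤ M * Real.exp 2 := le_mul_of_one_le_right hM hexp
        _ = M * Real.exp 2 * ((4/3:ℝ)^β * (3/4:ℝ)^β) := by rw [hprod]; ring
        _ = M * Real.exp 2 * (4/3:ℝ)^β * (3/4:ℝ)^β := by ring
        _ ≤ M * Real.exp 2 * (4/3:ℝ)^β * (1 - w^2)^β := by
            apply mul_le_mul_of_nonneg_left h34
            exact mul_nonneg (mul_nonneg hM (Real.exp_pos 2).le) (Real.rpow_nonneg (by norm_num) _)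
    · have hw0' : (0:ℝ) < w := lt_trans (by norm_num) hw2
      have h1w : (0:ℝ) < 1 - w := by linarith
      set t : ℝ := (1 - w)⁻¹ with ht
      have ht0 : 0 < t := inv_pos.mpr h1w
      set j : ℕ := ⌈t⌉₊ with hjdef
      have hj1 : 1 ≤ j := Nat.one_le_ceil_iff.mpr ht0
      have hjt : t ≤ (j:ℝ) := Nat.le_ceil t
      have hjt1 : (j:ℝ) - 1 ≤ t := by
        have := Nat.ceil_lt_add_one ht0.le
        rw [hjdef]; linarith
      have hK := hkeyM j hj1
      have hb1 : (1 - w^2)⁻¹ ≤ (j:ℝ) := by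
        have h2 : (1 - w^2)⁻¹ ≤ t := by
          rw [ht]
          apply inv_anti₀ h1w (by nlinarith)
        linarith
      have hjβ : ((1-w^2)⁻¹)^β ≤ (j:ℝ)^β :=
        Real.rpow_le_rpow (by positivity) hb1 hβ.le
      have hwj : Real.exp (-2) ≤ w^(j-1) := by
        have hlog : 1 - w⁻¹ ≤ Real.log w := by
          have h2 := Real.log_le_sub_one_of_pos (inv_pos.mpr hw0')
          rw [Real.log_inv] at h2
          linarith
        have hwt : Real.exp (-2) ≤ w ^ t := by
          rw [Real.rpow_def_of_pos hw0']
          apply Real.exp_le_exp.mpr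
          have e : t * (1 - w⁻¹) = -w⁻¹ := by
            rw [ht]; field_simp; ring
          have h3 : t * (1 - w⁻¹) ≤ t * Real.log w :=
            mul_le_mul_of_nonneg_left hlog ht0.le
          have hinv : w⁻¹ ≤ 2 := by
            have h4 := inv_anti₀ (by norm_num : (0:ℝ) < 1/2) hw2.le
            simpa using h4
          calc (-2:ℝ) ≤ -w⁻¹ := by linarith
            _ = t * (1 - w⁻¹) := e.symm
            _ ≤ t * Real.log w := h3
            _ = Real.log w * t := mul_comm _ _
        have hcast : ((j-1:ℕ):ℝ) ≤ t := by
          rw [Nat.cast_sub hj1]; push_cast; linarith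
        have hmono : w ^ t ≤ w ^ (((j-1:ℕ)):ℝ) :=
          Real.rpow_le_rpow_of_exponent_ge hw0' hw1.le hcast
        rw [Real.rpow_natCast] at hmono
        exact hwt.trans hmono
      have hinvmul : ((1-w^2)⁻¹)^β * (1-w^2)^β = 1 := by
        rw [← Real.mul_rpow (by positivity) hw2pos.le, inv_mul_cancel₀ hw2pos.ne', Real.one_rpow]
      have hexpmul : Real.exp (-2) * Real.exp 2 = 1 := by
        rw [← Real.exp_add]; norm_num
      have h5 : ((1-w^2)⁻¹)^β * Real.exp (-2) * A ≤ M :=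
        le_trans (mul_le_mul_of_nonneg_right
          (mul_le_mul hjβ hwj (Real.exp_pos _).le (Real.rpow_nonneg (Nat.cast_nonneg j) β)) hA0) hK
      have h6 : A ≤ M * ((1-w^2)^β * Real.exp 2) := by
        have h7 := mul_le_mul_of_nonneg_right h5
          (mul_nonneg (Real.rpow_nonneg hw2pos.le β) (Real.exp_pos 2).le)
        calc A = 1 * 1 * A := by ring
          _ = (((1-w^2)⁻¹)^β * (1-w^2)^β) * (Real.exp (-2) * Real.exp 2) * A := by
              rw [hinvmul, hexpmul]
          _ = ((1-w^2)⁻¹)^β * Real.exp (-2) * A * ((1-w^2)^β * Real.exp 2) := by ring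
          _ ≤ M * ((1-w^2)^β * Real.exp 2) := h7
      have h43 : (1:ℝ) ≤ (4/3:ℝ)^β := by
        have := Real.rpow_le_rpow (by norm_num : (0:ℝ) ≤ 1) (by norm_num : (1:ℝ) ≤ 4/3) hβ.le
        rwa [Real.one_rpow] at this
      calc A ≤ M * ((1-w^2)^β * Real.exp 2) := h6
        _ = M * Real.exp 2 * 1 * (1-w^2)^β := by ring
        _ ≤ M * Real.exp 2 * (4/3:ℝ)^β * (1-w^2)^β := by
            apply mul_le_mul_of_nonneg_right _ (Real.rpow_nonneg hw2pos.le β)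
            exact mul_le_mul_of_nonneg_left h43 (mul_nonneg hM (Real.exp_pos 2).le)
end
end
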